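/- arXiv:math/0508487 — 2 statements merged into one kernel-verified Lean document; each statement's English description precedes it below -/
import Mathlib

section
/- Suppose in addition that X has nondecreasing paths (X is an ascending subordinator) and that there is a function φ : [0, ∞) → [0, ∞) with E[e^{−λ X_t}] = e^{−t φ(λ)} for all t, λ ≥ 0. Then for every α > 0, β ≥ 0 and x ≥ 0, E[e^{−α τ_x^+ − β X_{τ_x^+}} 1_{{τ_x^+ < ∞}}] = (α + φ(β)) ∫_0^∞ e^{−α t} E[e^{−β X_t} 1_{{X_t > x}}] dt; that is, the left-hand side equals (α + φ(β)) ∫_{(x,∞)} e^{−β z} dU^{(α)}(z), where U^{(α)} is the α-resolvent measure of X defined by U^{(α)}(A) = ∫_0^∞ e^{−α t} ℙ(X_t ∈ A) dt. -/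
open MeasureTheory ProbabilityTheory Set Filter
open scoped ENNReal NNReal Classical

noncomputable section

namespace AKLevy

variable {Ω : Type*}

/-- Running supremum `X̄_t = sup_{0 ≤ s ≤ t} X_s` of a process. -/
def runSup (X : ℝ → Ω → ℝ) (t : ℝ) (ω : Ω) : ℝ :=
  sSup ((fun s => X s ω) '' Set.Icc 0 t)

/-- Running infimum `X̲_t = inf_{0 ≤ s ≤ t} X_s` of a process. -/
def runInf (X : ℝ → Ω → ℝ) (t : ℝ) (ω : Ω) : ℝ :=
  sInf ((fun s => X s ω) '' Set.Icc 0 t)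

/-- All-time supremum `X̄_∞ = sup_{t ≥ 0} X_t`. -/
def supAll (X : ℝ → Ω → ℝ) (ω : Ω) : ℝ :=
  sSup ((fun s => X s ω) '' Set.Ici 0)

/-- All-time infimum `X̲_∞ = inf_{t ≥ 0} X_t`. -/
def infAll (X : ℝ → Ω → ℝ) (ω : Ω) : ℝ :=
  sInf ((fun s => X s ω) '' Set.Ici 0)

/-- `X` is a real-valued Lévy process with respect to the filtration `ℱ`,
on a filtered probability space satisfying the usual conditions. -/
structure IsLevy [m0 : MeasurableSpace Ω] (P : Measure Ω) (ℱ : Filtration ℝ m0)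
    (X : ℝ → Ω → ℝ) : Prop where
  isProb : IsProbabilityMeasure P
  adapted : ∀ t : ℝ, 0 ≤ t → StronglyMeasurable[ℱ t] (X t)
  zero : ∀ᵐ ω ∂P, X 0 ω = 0
  rightCont : ∀ ω, ∀ t : ℝ, 0 ≤ t → ContinuousWithinAt (fun s => X s ω) (Set.Ici t) t
  leftLim : ∀ ω, ∀ t : ℝ, 0 < t →
    ∃ l : ℝ, Tendsto (fun s => X s ω) (nhdsWithin t (Set.Iio t)) (nhds l)
  indepIncrements : ∀ s t : ℝ, 0 ≤ s → s ≤ t →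
    Indep (MeasurableSpace.comap (fun ω => X t ω - X s ω) inferInstance) (ℱ s) P
  stationary : ∀ s t : ℝ, 0 ≤ s → s ≤ t →
    Measure.map (fun ω => X t ω - X s ω) P = Measure.map (X (t - s)) P
  filtRightCont : ∀ t : ℝ, (ℱ t : MeasurableSpace Ω) = ⨅ s ∈ Set.Ioi t, (ℱ s : MeasurableSpace Ω)
  complete : ∀ N : Set Ω, MeasurableSet N → P N = 0 → MeasurableSet[ℱ 0] N

/-- `τ_x^+ < ∞`: the process passes strictly above level `x` at some nonnegative time. -/
def hitsAbove (X : ℝ → Ω → ℝ) (x : ℝ) (ω : Ω) : Prop := ∃ t, 0 ≤ t ∧ x < X t ω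

/-- First passage time above `x`:  `τ_x^+ = inf {t ≥ 0 : X_t > x}` (junk value if never). -/
def tauAbove (X : ℝ → Ω → ℝ) (x : ℝ) (ω : Ω) : ℝ := sInf {t : ℝ | 0 ≤ t ∧ x < X t ω}

/-- `τ_x^- < ∞`: the process passes strictly below level `x` at some nonnegative time. -/
def hitsBelow (X : ℝ → Ω → ℝ) (x : ℝ) (ω : Ω) : Prop := ∃ t, 0 ≤ t ∧ X t ω < x

/-- First passage time below `x`:  `τ_x^- = inf {t ≥ 0 : X_t < x}` (junk value if never). -/
def tauBelow (X : ℝ → Ω → ℝ) (x : ℝ) (ω : Ω) : ℝ := sInf {t : ℝ | 0 ≤ t ∧ X t ω < x}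

/-- The `[0,∞]`-valued first passage time `σ_x = inf { t ≥ 0 : x + X_t < y }`, with `inf ∅ = ∞`. -/
def hitBelowE (X : ℝ → Ω → ℝ) (y x : ℝ) (ω : Ω) : ℝ≥0∞ :=
  if ∃ t, 0 ≤ t ∧ x + X t ω < y then ENNReal.ofReal (sInf {t : ℝ | 0 ≤ t ∧ x + X t ω < y})
  else ∞

/-- The stopped clock `t ∧ σ_x` (real-valued), where `σ_x = inf{ t ≥ 0 : x + X_t < y}`. -/
def stoppedClock (X : ℝ → Ω → ℝ) (y x : ℝ) (t : ℝ) (ω : Ω) : ℝ :=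
  (min (ENNReal.ofReal t) (hitBelowE X y x ω)).toReal

/-- A `[0,∞]`-valued stopping time of the filtration `ℱ`. -/
def IsStopTime [m0 : MeasurableSpace Ω] (ℱ : Filtration ℝ m0) (τ : Ω → ℝ≥0∞) : Prop :=
  ∀ t : ℝ, 0 ≤ t → MeasurableSet[ℱ t] {ω | τ ω ≤ ENNReal.ofReal t}

/-- Discounted payoff `e^{-rτ} G(x + X_τ)` at a `[0,∞]`-valued time `τ`, set to `0` on `{τ = ∞}`. -/
def stopPayoff (X : ℝ → Ω → ℝ) (r x : ℝ) (G : ℝ → ℝ) (τ : Ω → ℝ≥0∞) (ω : Ω) : ℝ :=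
  if τ ω ≠ ∞ then Real.exp (-(r * (τ ω).toReal)) * G (x + X ((τ ω).toReal) ω) else 0

/-- Discounted American put payoff `e^{-rτ}(K - e^{x + X_τ})^+ 1_{τ < ∞}`. -/
def putPayoff (X : ℝ → Ω → ℝ) (r K x : ℝ) (τ : Ω → ℝ≥0∞) (ω : Ω) : ℝ :=
  stopPayoff X r x (fun z => max (K - Real.exp z) 0) τ ω

/-- Value function `v(x) = sup_τ E[e^{-rτ}(K - e^{x+X_τ})^+ 1_{τ<∞}]`, the supremum
being over all `[0,∞]`-valued stopping times of `ℱ`. -/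
def putValue [m0 : MeasurableSpace Ω] (P : Measure Ω) (ℱ : Filtration ℝ m0)
    (X : ℝ → Ω → ℝ) (r K x : ℝ) : ℝ :=
  ⨆ τ : {τ : Ω → ℝ≥0∞ // IsStopTime ℱ τ}, ∫ ω, putPayoff X r K x τ.1 ω ∂P

/-- `m = E[e^{X̲_{e_r}}]`, where `e_r` is an independent exponential time of rate `r > 0`,
and `e_0 = ∞`. -/
def mInf [m0 : MeasurableSpace Ω] (P : Measure Ω) (X : ℝ → Ω → ℝ) (r : ℝ) : ℝ :=
  if 0 < r then
    ∫ t in Set.Ioi (0 : ℝ), r * Real.exp (-(r * t)) * (∫ ω, Real.exp (runInf X t ω) ∂P)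
  else ∫ ω, Real.exp (infAll X ω) ∂P

/-- `P(X̲_{e_r} = 0)`, where `e_r` is an independent exponential time of rate `r > 0`,
and `e_0 = ∞`. -/
def atomZeroProb [m0 : MeasurableSpace Ω] (P : Measure Ω) (X : ℝ → Ω → ℝ) (r : ℝ) : ℝ :=
  if 0 < r then
    ∫ t in Set.Ioi (0 : ℝ), r * Real.exp (-(r * t)) * (P {ω | runInf X t ω = 0}).toReal
  else (P {ω | infAll X ω = 0}).toReal

/-- The event `{τ_0^- = 0}`: `0` is (pathwise) immediately reached from below, i.e.
`inf{t ≥ 0 : X_t < 0} = 0`. -/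
def regularBelow (X : ℝ → Ω → ℝ) : Set Ω :=
  {ω | ∀ ε > (0 : ℝ), ∃ t, 0 ≤ t ∧ t < ε ∧ X t ω < 0}

/-- `E[e^{-γ X̄_{e_α}}] = ∫_0^∞ α e^{-α t} E[e^{-γ X̄_t}] dt`. -/
def expSupLT [m0 : MeasurableSpace Ω] (P : Measure Ω) (X : ℝ → Ω → ℝ) (α γ : ℝ) : ℝ :=
  ∫ t in Set.Ioi (0 : ℝ), α * Real.exp (-(α * t)) * (∫ ω, Real.exp (-(γ * runSup X t ω)) ∂P)

/-- The function `h_{α,β}(x) = E[e^{-α σ_x + β (x + X_{σ_x})} 1_{σ_x < ∞}]`, where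
`σ_x = inf{t ≥ 0 : x + X_t < 0}`. -/
def hAB [m0 : MeasurableSpace Ω] (P : Measure Ω) (X : ℝ → Ω → ℝ) (α β : ℝ) (z : ℝ) : ℝ :=
  ∫ ω, (if hitsBelow X (-z) ω then
      Real.exp (-(α * tauBelow X (-z) ω) + β * (z + X (tauBelow X (-z) ω) ω)) else 0) ∂P

/-- `v_y(x) = E[e^{-r σ_x} (K - e^{x + X_{σ_x}})^+ 1_{σ_x<∞}]` where
`σ_x = inf{t ≥ 0 : x + X_t < y}`. -/
def vy [m0 : MeasurableSpace Ω] (P : Measure Ω) (X : ℝ → Ω → ℝ) (r K y : ℝ) (z : ℝ) : ℝ :=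
  ∫ ω, putPayoff X r K z (hitBelowE X y z) ω ∂P

/-- The process `f` (indexed by `t ≥ 0`) is a martingale with respect to `ℱ` and `P`. -/
def MartOn [m0 : MeasurableSpace Ω] (P : Measure Ω) (ℱ : Filtration ℝ m0)
    (f : ℝ → Ω → ℝ) : Prop :=
  (∀ t : ℝ, 0 ≤ t → StronglyMeasurable[ℱ t] (f t)) ∧
  (∀ t : ℝ, 0 ≤ t → Integrable (f t) P) ∧
  ∀ s t : ℝ, 0 ≤ s → s ≤ t → P[f t|ℱ s] =ᵐ[P] f s

/-- The process `f` (indexed by `t ≥ 0`) is a supermartingale w.r.t. `ℱ` and `P`. -/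
def SupermartOn [m0 : MeasurableSpace Ω] (P : Measure Ω) (ℱ : Filtration ℝ m0)
    (f : ℝ → Ω → ℝ) : Prop :=
  (∀ t : ℝ, 0 ≤ t → StronglyMeasurable[ℱ t] (f t)) ∧
  (∀ t : ℝ, 0 ≤ t → Integrable (f t) P) ∧
  ∀ s t : ℝ, 0 ≤ s → s ≤ t → P[f t|ℱ s] ≤ᵐ[P] f s


section Aux
variable {Ω : Type*}


lemma measurable_comp_countable {α : Type*} [MeasurableSpace α] [MeasurableSpace Ω]
    {X : ℝ → Ω → ℝ} {u : α → ℝ} (hu : Measurable u) (hcr : (Set.range u).Countable)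
    (hX : ∀ s ∈ Set.range u, Measurable (X s)) :
    Measurable (fun p : α × Ω => X (u p.1) p.2) := by
  intro B hB
  have hset : (fun p : α × Ω => X (u p.1) p.2) ⁻¹' B =
      ⋃ c ∈ Set.range u, ((fun p : α × Ω => u p.1) ⁻¹' {c}) ∩ {p : α × Ω | X c p.2 ∈ B} := by
    ext p
    simp only [mem_preimage, mem_iUnion, mem_inter_iff, mem_singleton_iff, mem_setOf_eq]
    constructor
    · intro h; exact ⟨u p.1, ⟨p.1, rfl⟩, rfl, h⟩
    · rintro ⟨c, _, rfl, h⟩; exact h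
  rw [hset]
  exact MeasurableSet.biUnion hcr fun c hc =>
    ((hu.comp measurable_fst) (measurableSet_singleton c)).inter
      ((hX c hc).comp measurable_snd hB)

/-- dyadic grid point just above `max t 0`. -/
def grid (n : ℕ) (t : ℝ) : ℝ := (⌈(2:ℝ) ^ n * max t 0⌉ : ℤ) / (2:ℝ) ^ n

lemma two_pow_pos (n : ℕ) : (0:ℝ) < 2 ^ n := by positivity

lemma grid_nonneg (n : ℕ) (t : ℝ) : 0 ≤ grid n t :=
  div_nonneg (by exact_mod_cast Int.ceil_nonneg (by positivity)) (two_pow_pos n).le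

lemma le_grid (n : ℕ) (t : ℝ) : max t 0 ≤ grid n t := by
  rw [grid, le_div_iff₀ (two_pow_pos n), mul_comm]
  exact Int.le_ceil _

lemma grid_le (n : ℕ) (t : ℝ) : grid n t ≤ max t 0 + ((2:ℝ) ^ n)⁻¹ := by
  rw [grid, div_le_iff₀ (two_pow_pos n), add_mul, inv_mul_cancel₀ (two_pow_pos n).ne']
  calc ((⌈(2:ℝ) ^ n * max t 0⌉ : ℤ) : ℝ) ≤ (2:ℝ) ^ n * max t 0 + 1 := (Int.ceil_lt_add_one _).le
  _ = max t 0 * 2 ^ n + 1 := by ring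

lemma measurable_grid (n : ℕ) : Measurable (grid n) := by
  have h1 : Measurable fun t : ℝ => (2:ℝ) ^ n * max t 0 :=
    (measurable_id.max measurable_const).const_mul _
  exact (measurable_from_top.comp h1.ceil).div_const _

lemma countable_range_grid (n : ℕ) : (Set.range (grid n)).Countable := by
  have : Set.range (grid n) ⊆ Set.range (fun k : ℤ => (k : ℝ) / 2 ^ n) := by
    rintro y ⟨t, rfl⟩; exact ⟨⌈(2:ℝ) ^ n * max t 0⌉, rfl⟩
  exact (Set.countable_range _).mono this

lemma tendsto_grid (t : ℝ) : Tendsto (fun n => grid n t) atTop (nhdsWithin (max t 0) (Set.Ici (max t 0))) := by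
  rw [tendsto_nhdsWithin_iff]
  constructor
  · refine tendsto_of_tendsto_of_tendsto_of_le_of_le tendsto_const_nhds ?_ (fun n => le_grid n t) (fun n => grid_le n t)
    have h2 : Tendsto (fun n : ℕ => ((2:ℝ) ^ n)⁻¹) atTop (nhds 0) := by
      exact tendsto_inv_atTop_zero.comp (tendsto_pow_atTop_atTop_of_one_lt (one_lt_two (α := ℝ)))
    simpa using tendsto_const_nhds.add h2
  · exact Filter.Eventually.of_forall fun n => le_grid n t

lemma integral_exp_neg_mul_Ioi {c : ℝ} (hc : 0 < c) (s : ℝ) :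
    (∫ t in Set.Ioi s, Real.exp (-(c * t))) = Real.exp (-(c * s)) / c := by
  have hderiv : ∀ u ∈ Set.Ioi s, HasDerivAt (fun t => -Real.exp (-(c * t)) / c) (Real.exp (-(c * u))) u := by
    intro u _
    have h1 : HasDerivAt (fun t : ℝ => -(c * t)) (-c) u := by
      have h := ((hasDerivAt_id u).const_mul c).neg
      rw [mul_one] at h
      exact h
    have h2 : HasDerivAt (fun t : ℝ => Real.exp (-(c * t))) (Real.exp (-(c * u)) * (-c)) u :=
      (Real.hasDerivAt_exp _).comp u h1
    have hh := (h2.neg).div_const c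
    have heq : -(Real.exp (-(c * u)) * -c) / c = Real.exp (-(c * u)) := by
      rw [mul_neg, neg_neg, mul_div_assoc, div_self hc.ne', mul_one]
    rw [heq] at hh
    exact hh
  have hint : IntegrableOn (fun t => Real.exp (-(c * t))) (Set.Ioi s) := by
    simpa [neg_mul] using exp_neg_integrableOn_Ioi s hc
  have hcont : ContinuousWithinAt (fun t => -Real.exp (-(c * t)) / c) (Set.Ici s) s := by
    exact (Continuous.continuousWithinAt (by continuity))
  have htend : Tendsto (fun t => -Real.exp (-(c * t)) / c) atTop (nhds 0) := by
    have h0 : Tendsto (fun t : ℝ => c * t) atTop atTop := Tendsto.const_mul_atTop hc tendsto_id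
    have h1 : Tendsto (fun t : ℝ => -(c * t)) atTop atBot := tendsto_neg_atTop_atBot.comp h0
    have h2 : Tendsto (fun t : ℝ => Real.exp (-(c * t))) atTop (nhds 0) :=
      Real.tendsto_exp_atBot.comp h1
    simpa using (h2.neg).div_const c
  have := integral_Ioi_of_hasDerivAt_of_tendsto hcont hderiv hint htend
  rw [this]; ring

lemma ae_fst_prod {α β : Type*} [MeasurableSpace α] [MeasurableSpace β] {μ : Measure α}
    {ν : Measure β} [SFinite ν] {p : α → Prop} (h : ∀ᵐ x ∂μ, p x) :
    ∀ᵐ z ∂μ.prod ν, p z.1 := by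
  rw [ae_iff] at h ⊢
  have hnull : (μ.prod ν) ((toMeasurable μ {x | ¬ p x}) ×ˢ (Set.univ : Set β)) = 0 := by
    rw [Measure.prod_prod, measure_toMeasurable, h, zero_mul]
  refine measure_mono_null (fun z hz => ?_) hnull
  exact (Set.mem_prod).2 ⟨subset_toMeasurable μ _ hz, Set.mem_univ _⟩


section LevyAux
variable [m0 : MeasurableSpace Ω] {P : Measure Ω} {ℱ : Filtration ℝ m0} {X : ℝ → Ω → ℝ} {x : ℝ}

lemma tau_nonneg (X : ℝ → Ω → ℝ) (x : ℝ) (ω : Ω) : 0 ≤ tauAbove X x ω :=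
  Real.sInf_nonneg fun t ht => ht.1

lemma hits_and_tau_le {ω : Ω} (t : ℝ) (ht : 0 ≤ t) (h : x < X t ω) :
    hitsAbove X x ω ∧ tauAbove X x ω ≤ t :=
  ⟨⟨t, ht, h⟩, csInf_le ⟨0, fun u hu => hu.1⟩ ⟨ht, h⟩⟩

lemma lt_X_of_tau_lt {ω : Ω} (hm : MonotoneOn (fun s => X s ω) (Set.Ici 0))
    (hh : hitsAbove X x ω) {t : ℝ} (ht : tauAbove X x ω < t) : x < X t ω := by
  obtain ⟨s, hs, hst⟩ := (csInf_lt_iff ⟨0, fun u hu => hu.1⟩ hh).1 ht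
  exact lt_of_lt_of_le hs.2 (hm hs.1 (le_trans hs.1 hst.le) hst.le)

lemma tau_le_iff {ω : Ω} (hm : MonotoneOn (fun s => X s ω) (Set.Ici 0)) {s : ℝ} (hs : 0 ≤ s) :
    (hitsAbove X x ω ∧ tauAbove X x ω ≤ s) ↔ ∀ q : ℚ, s < (q:ℝ) → x < X (q:ℝ) ω := by
  constructor
  · rintro ⟨hh, hle⟩ q hq
    exact lt_X_of_tau_lt hm hh (lt_of_le_of_lt hle hq)
  · intro h
    obtain ⟨q0, hq0⟩ := exists_rat_gt s
    have hh : hitsAbove X x ω := ⟨(q0:ℝ), le_trans hs hq0.le, h q0 hq0⟩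
    refine ⟨hh, ?_⟩
    by_contra hc
    push_neg at hc
    obtain ⟨q, hq1, hq2⟩ := exists_rat_btwn hc
    exact absurd (lt_of_le_of_lt (hits_and_tau_le (x := x) (q:ℝ) (le_trans hs hq1.le) (h q hq1)).2 hq2)
      (lt_irrefl _)

lemma hits_iff {ω : Ω} (hm : MonotoneOn (fun s => X s ω) (Set.Ici 0)) :
    hitsAbove X x ω ↔ ∃ q : ℚ, 0 ≤ (q:ℝ) ∧ x < X (q:ℝ) ω := by
  constructor
  · rintro ⟨t, ht, hx⟩
    obtain ⟨q, hq⟩ := exists_rat_gt t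
    exact ⟨q, le_trans ht hq.le, lt_of_lt_of_le hx (hm ht (le_trans ht hq.le) hq.le)⟩
  · rintro ⟨q, hq0, hx⟩; exact ⟨(q:ℝ), hq0, hx⟩

lemma measX (hX : IsLevy P ℱ X) {s : ℝ} (hs : 0 ≤ s) : Measurable (X s) :=
  ((hX.adapted s hs).measurable).mono (ℱ.le s) le_rfl

/-- The event `{τ ≤ s} ∩ {hits}`. -/
def Aset (X : ℝ → Ω → ℝ) (x s : ℝ) : Set Ω := {ω | hitsAbove X x ω ∧ tauAbove X x ω ≤ s}

lemma Aset_mem_filt (hX : IsLevy P ℱ X)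
    (hmono : ∀ ω, MonotoneOn (fun s => X s ω) (Set.Ici 0)) {s : ℝ} (hs : 0 ≤ s) :
    MeasurableSet[ℱ s] (Aset X x s) := by
  have key : ∀ u, s < u → MeasurableSet[ℱ u] (Aset X x s) := by
    intro u hu
    have hEq : Aset X x s = ⋂ q : {q : ℚ // s < (q:ℝ) ∧ (q:ℝ) ≤ u}, {ω | x < X (q:ℝ) ω} := by
      ext ω
      constructor
      · intro hω
        exact Set.mem_iInter.2 fun q => lt_X_of_tau_lt (hmono ω) hω.1 (lt_of_le_of_lt hω.2 q.2.1)
      · intro hω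
        have hω' := Set.mem_iInter.1 hω
        rw [Aset, mem_setOf_eq, tau_le_iff (hmono ω) hs]
        intro q hq
        by_cases hqu : (q:ℝ) ≤ u
        · exact hω' ⟨q, hq, hqu⟩
        · push_neg at hqu
          obtain ⟨q', hq1', hq2'⟩ := exists_rat_btwn hu
          have hx' : x < X (q':ℝ) ω := hω' ⟨q', hq1', hq2'.le⟩
          have h0q' : (0:ℝ) ≤ (q':ℝ) := le_trans hs hq1'.le
          exact lt_of_lt_of_le hx' (hmono ω h0q' (le_trans h0q' (le_trans hq2'.le hqu.le))
            (le_trans hq2'.le hqu.le))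
    rw [hEq]
    refine MeasurableSet.iInter fun q => ?_
    have hq0 : (0:ℝ) ≤ (q:ℝ) := le_trans hs q.2.1.le
    have : MeasurableSet[ℱ (q:ℝ)] {ω | x < X (q:ℝ) ω} :=
      (hX.adapted (q:ℝ) hq0).measurable measurableSet_Ioi
    exact ℱ.mono q.2.2 _ this
  have h2 := hX.filtRightCont s
  have h3 : MeasurableSet[⨅ u ∈ Set.Ioi s, (ℱ u : MeasurableSpace Ω)] (Aset X x s) := by
    rw [MeasurableSpace.measurableSet_iInf]
    intro u
    rw [MeasurableSpace.measurableSet_iInf]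
    intro hu
    exact key u hu
  exact h2 ▸ h3

lemma Aset_meas (hX : IsLevy P ℱ X)
    (hmono : ∀ ω, MonotoneOn (fun s => X s ω) (Set.Ici 0)) {s : ℝ} (hs : 0 ≤ s) :
    MeasurableSet (Aset X x s) :=
  ℱ.le s _ (Aset_mem_filt hX hmono hs)

lemma hits_meas (hX : IsLevy P ℱ X)
    (hmono : ∀ ω, MonotoneOn (fun s => X s ω) (Set.Ici 0)) :
    MeasurableSet {ω | hitsAbove X x ω} := by
  have : {ω | hitsAbove X x ω} = ⋃ q : {q : ℚ // 0 ≤ (q:ℝ)}, {ω | x < X (q:ℝ) ω} := by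
    ext ω
    simp only [mem_setOf_eq, Set.mem_iUnion]
    rw [hits_iff (hmono ω)]
    exact ⟨fun ⟨q, h1, h2⟩ => ⟨⟨q, h1⟩, h2⟩, fun ⟨q, h⟩ => ⟨q, q.2, h⟩⟩
  rw [this]
  exact MeasurableSet.iUnion fun q => measX hX q.2 measurableSet_Ioi

lemma tau_meas (hX : IsLevy P ℱ X)
    (hmono : ∀ ω, MonotoneOn (fun s => X s ω) (Set.Ici 0)) :
    Measurable (tauAbove X x) := by
  apply measurable_of_Iic
  intro s
  by_cases hs : 0 ≤ s
  · have : tauAbove X x ⁻¹' (Set.Iic s) = Aset X x s ∪ {ω | hitsAbove X x ω}ᶜ := by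
      ext ω
      simp only [mem_preimage, mem_Iic, Set.mem_union, Aset, mem_setOf_eq, Set.mem_compl_iff]
      constructor
      · intro h
        by_cases hh : hitsAbove X x ω
        · exact Or.inl ⟨hh, h⟩
        · exact Or.inr hh
      · rintro (⟨_, h⟩ | hh)
        · exact h
        · have : {t : ℝ | 0 ≤ t ∧ x < X t ω} = ∅ := by
            ext t; simp only [mem_setOf_eq, Set.mem_empty_iff_false, iff_false, not_and]
            intro ht hxt; exact hh ⟨t, ht, hxt⟩
          rw [tauAbove, this, Real.sInf_empty]; exact hs
    rw [this]
    exact (Aset_meas hX hmono hs).union (hits_meas hX hmono).compl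
  · have : tauAbove X x ⁻¹' (Set.Iic s) = ∅ := by
      ext ω
      simp only [mem_preimage, mem_Iic, Set.mem_empty_iff_false, iff_false, not_le]
      exact lt_of_lt_of_le (lt_of_not_ge hs) (tau_nonneg X x ω)
    rw [this]
    exact MeasurableSet.empty

lemma jointMeasX (hX : IsLevy P ℱ X) :
    Measurable (fun p : ℝ × Ω => X (max p.1 0) p.2) := by
  have hmeas : ∀ n : ℕ, Measurable (fun p : ℝ × Ω => X (grid n p.1) p.2) := fun n =>
    measurable_comp_countable (measurable_grid n) (countable_range_grid n)
      (fun s hs => measX hX (by obtain ⟨t, rfl⟩ := hs; exact grid_nonneg n t))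
  apply measurable_of_tendsto_metrizable hmeas
  rw [tendsto_pi_nhds]
  intro p
  exact Tendsto.comp (hX.rightCont p.2 (max p.1 0) (le_max_right _ _)) (tendsto_grid p.1)

end LevyAux
end Aux


section Core
variable [m0 : MeasurableSpace Ω] {P : Measure Ω} {ℱ : Filtration ℝ m0} {X : ℝ → Ω → ℝ} {x : ℝ}

lemma ae_nonneg (hX : IsLevy P ℱ X)
    (hmono : ∀ ω, MonotoneOn (fun s => X s ω) (Set.Ici 0)) :
    ∀ᵐ ω ∂P, ∀ s, 0 ≤ s → 0 ≤ X s ω := by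
  filter_upwards [hX.zero] with ω h0 s hs
  calc (0:ℝ) = X 0 ω := h0.symm
  _ ≤ X s ω := hmono ω Set.self_mem_Ici hs hs

lemma meas_efun (hX : IsLevy P ℱ X) (α β : ℝ) :
    Measurable (fun p : ℝ × Ω => Real.exp (-(α * p.1) - β * X (max p.1 0) p.2)) :=
  Real.measurable_exp.comp (((measurable_fst.const_mul α).neg).sub ((jointMeasX hX).const_mul β))

lemma fubini_swap (P : Measure Ω) [IsProbabilityMeasure P] {A : Set Ω} (hA : MeasurableSet A)
    {k : ℝ → Ω → ℝ} (hk : Measurable (fun p : ℝ × Ω => k p.1 p.2)) {α : ℝ} (hα : 0 < α)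
    (hbound : ∀ᵐ ω ∂P, ∀ t, ‖k t ω‖ ≤ Real.exp (-(α * t))) (s : ℝ) :
    ∫ ω in A, (∫ t in Set.Ioi s, k t ω) ∂P = ∫ t in Set.Ioi s, (∫ ω in A, k t ω ∂P) := by
  refine integral_integral_swap (f := fun ω t => k t ω) ?_
  have hmeas : AEStronglyMeasurable (Function.uncurry fun ω t => k t ω)
      ((P.restrict A).prod (volume.restrict (Set.Ioi s))) := by
    have : Measurable (fun p : Ω × ℝ => k p.2 p.1) := hk.comp measurable_swap
    exact this.aestronglyMeasurable
  have hgint : Integrable (fun p : Ω × ℝ => Real.exp (-(α * p.2)))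
      ((P.restrict A).prod (volume.restrict (Set.Ioi s))) := by
    have hgm : AEStronglyMeasurable (fun p : Ω × ℝ => Real.exp (-(α * p.2)))
        ((P.restrict A).prod (volume.restrict (Set.Ioi s))) :=
      (Real.measurable_exp.comp ((measurable_snd.const_mul α).neg)).aestronglyMeasurable
    refine (integrable_prod_iff hgm).2 ⟨?_, ?_⟩
    · refine Filter.Eventually.of_forall fun ω => ?_
      have h := exp_neg_integrableOn_Ioi s hα
      simp only [neg_mul] at h
      exact h
    · simpa using integrable_const (μ := P.restrict A) (∫ y in Set.Ioi s, ‖Real.exp (-(α * y))‖)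
  refine Integrable.mono' hgint hmeas ?_
  have hb' : ∀ᵐ ω ∂(P.restrict A), ∀ t, ‖k t ω‖ ≤ Real.exp (-(α * t)) :=
    ae_restrict_of_ae hbound
  filter_upwards [ae_fst_prod (ν := volume.restrict (Set.Ioi s)) hb'] with p hp
  exact hp p.2

lemma inner_factor (hX : IsLevy P ℱ X)
    (hmono : ∀ ω, MonotoneOn (fun s => X s ω) (Set.Ici 0))
    (φ : ℝ → ℝ)
    (hφ : ∀ t l : ℝ, 0 ≤ t → 0 ≤ l →
      (∫ ω, Real.exp (-(l * X t ω)) ∂P) = Real.exp (-(t * φ l)))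
    {β : ℝ} (hβ : 0 ≤ β) {s t : ℝ} (hs : 0 ≤ s) (hst : s ≤ t)
    {A : Set Ω} (hA : MeasurableSet[ℱ s] A) :
    ∫ ω in A, Real.exp (-(β * X t ω)) ∂P
      = Real.exp (-((t - s) * φ β)) * ∫ ω in A, Real.exp (-(β * X s ω)) ∂P := by
  haveI := hX.isProb
  have hAm : MeasurableSet A := ℱ.le s _ hA
  have ht : 0 ≤ t := le_trans hs hst
  set f : Ω → ℝ := fun ω => Real.exp (-(β * (X t ω - X s ω))) with hf_def
  set g : Ω → ℝ := A.indicator (fun ω => Real.exp (-(β * X s ω))) with hg_def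
  have hstep1 : ∫ ω in A, Real.exp (-(β * X t ω)) ∂P = ∫ ω, f ω * g ω ∂P := by
    rw [← integral_indicator hAm]
    congr 1
    funext ω
    by_cases hω : ω ∈ A
    · simp only [Set.indicator_of_mem hω, hf_def, hg_def, ← Real.exp_add]
      ring_nf
    · simp [Set.indicator_of_notMem hω, hf_def, hg_def]
  have hindep : IndepFun f g P := by
    have base : Indep (MeasurableSpace.comap (fun ω => X t ω - X s ω) inferInstance) (ℱ s) P :=
      hX.indepIncrements s t hs hst
    have h1 : MeasurableSpace.comap f inferInstance ≤
        MeasurableSpace.comap (fun ω => X t ω - X s ω) inferInstance := by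
      have : f = (fun y : ℝ => Real.exp (-(β * y))) ∘ (fun ω => X t ω - X s ω) := rfl
      rw [this, ← MeasurableSpace.comap_comp]
      exact MeasurableSpace.comap_mono
        (measurable_iff_comap_le.1 (Real.measurable_exp.comp (measurable_id.const_mul β).neg))
    have h2 : MeasurableSpace.comap g inferInstance ≤ ℱ s := by
      have hgm : Measurable[ℱ s] g := by
        refine Measurable.indicator ?_ hA
        exact Real.measurable_exp.comp (((hX.adapted s hs).measurable).const_mul β).neg
      exact measurable_iff_comap_le.1 hgm
    exact indep_of_indep_of_le_left (indep_of_indep_of_le_right base h2) h1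
  have hfm : Measurable f :=
    Real.measurable_exp.comp (((measX hX ht).sub (measX hX hs)).const_mul β).neg
  have hgm0 : Measurable g :=
    (Real.measurable_exp.comp ((measX hX hs).const_mul β).neg).indicator hAm
  have hfint : Integrable f P := by
    refine Integrable.mono' (integrable_const 1) hfm.aestronglyMeasurable ?_
    refine Filter.Eventually.of_forall fun ω => ?_
    rw [Real.norm_eq_abs, Real.abs_exp, Real.exp_le_one_iff]
    have : X s ω ≤ X t ω := hmono ω hs ht hst
    nlinarith
  have hgint : Integrable g P := by
    refine Integrable.mono' (integrable_const 1) hgm0.aestronglyMeasurable ?_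
    filter_upwards [ae_nonneg hX hmono] with ω hω
    by_cases hωA : ω ∈ A
    · simp only [hg_def, Set.indicator_of_mem hωA, Real.norm_eq_abs, Real.abs_exp,
        Real.exp_le_one_iff]
      nlinarith [hω s hs]
    · simp [hg_def, Set.indicator_of_notMem hωA]
  have hmul := hindep.integral_mul_eq_mul_integral hfint.aestronglyMeasurable hgint.aestronglyMeasurable
  have hEf : ∫ ω, f ω ∂P = Real.exp (-((t - s) * φ β)) := by
    have hmap := hX.stationary s t hs hst
    have hWm : Measurable (fun ω => X t ω - X s ω) := (measX hX ht).sub (measX hX hs)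
    have hcont : Continuous (fun y : ℝ => Real.exp (-(β * y))) := by continuity
    have e1 : ∫ ω, f ω ∂P = ∫ y, Real.exp (-(β * y)) ∂(Measure.map (fun ω => X t ω - X s ω) P) :=
      (integral_map hWm.aemeasurable hcont.aestronglyMeasurable).symm
    have e2 : ∫ y, Real.exp (-(β * y)) ∂(Measure.map (X (t - s)) P)
        = ∫ ω, Real.exp (-(β * X (t - s) ω)) ∂P :=
      integral_map (measX hX (sub_nonneg.2 hst)).aemeasurable hcont.aestronglyMeasurable
    rw [e1, hmap, e2, hφ (t - s) β (sub_nonneg.2 hst) hβ]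
  have hEg : ∫ ω, g ω ∂P = ∫ ω in A, Real.exp (-(β * X s ω)) ∂P := integral_indicator hAm
  calc ∫ ω in A, Real.exp (-(β * X t ω)) ∂P = ∫ ω, f ω * g ω ∂P := hstep1
  _ = (∫ ω, f ω ∂P) * ∫ ω, g ω ∂P := by simpa [Pi.mul_apply] using hmul
  _ = Real.exp (-((t - s) * φ β)) * ∫ ω in A, Real.exp (-(β * X s ω)) ∂P := by rw [hEf, hEg]

end Core


section Core2
variable [m0 : MeasurableSpace Ω] {P : Measure Ω} {ℱ : Filtration ℝ m0} {X : ℝ → Ω → ℝ} {x : ℝ}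

/-- integrability and bound for the path integral `J s ω`, for a "good" path. -/
lemma J_props (hX : IsLevy P ℱ X) {α β : ℝ} (hα : 0 < α) (hβ : 0 ≤ β) {ω : Ω}
    (hgood : ∀ s, 0 ≤ s → 0 ≤ X s ω) (s : ℝ) :
    IntegrableOn (fun t => Real.exp (-(α * t) - β * X (max t 0) ω)) (Set.Ioi s) volume ∧
      |∫ t in Set.Ioi s, Real.exp (-(α * t) - β * X (max t 0) ω)| ≤ Real.exp (-(α * s)) / α := by
  have hpair : Measurable (fun t : ℝ => ((t, ω) : ℝ × Ω)) :=
    measurable_id.prodMk measurable_const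
  have h2 : Measurable (fun t : ℝ => X (max t 0) ω) := (jointMeasX hX).comp hpair
  have hmeas : Measurable (fun t : ℝ => Real.exp (-(α * t) - β * X (max t 0) ω)) :=
    Real.measurable_exp.comp (((measurable_id.const_mul α).neg).sub (h2.const_mul β))
  have hbd : ∀ t : ℝ, ‖Real.exp (-(α * t) - β * X (max t 0) ω)‖ ≤ Real.exp (-(α * t)) := by
    intro t
    rw [Real.norm_eq_abs, Real.abs_exp, Real.exp_le_exp]
    nlinarith [hgood (max t 0) (le_max_right t 0), hβ,
      mul_nonneg hβ (hgood (max t 0) (le_max_right t 0))]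
  have hexpint : IntegrableOn (fun t : ℝ => Real.exp (-(α * t))) (Set.Ioi s) volume := by
    simpa [neg_mul] using exp_neg_integrableOn_Ioi s hα
  have hint : IntegrableOn (fun t => Real.exp (-(α * t) - β * X (max t 0) ω)) (Set.Ioi s) volume :=
    Integrable.mono' hexpint hmeas.aestronglyMeasurable
      (Filter.Eventually.of_forall hbd)
  refine ⟨hint, ?_⟩
  have h1 : ‖∫ t in Set.Ioi s, Real.exp (-(α * t) - β * X (max t 0) ω)‖
      ≤ ∫ t in Set.Ioi s, Real.exp (-(α * t)) :=
    norm_integral_le_of_norm_le hexpint (Filter.Eventually.of_forall hbd)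
  rw [Real.norm_eq_abs] at h1
  calc |∫ t in Set.Ioi s, Real.exp (-(α * t) - β * X (max t 0) ω)|
      ≤ ∫ t in Set.Ioi s, Real.exp (-(α * t)) := h1
  _ = Real.exp (-(α * s)) / α := integral_exp_neg_mul_Ioi hα s

lemma meas_J (hX : IsLevy P ℱ X) (α β : ℝ) {u : Ω → ℝ} (hu : Measurable u)
    (hu0 : ∀ ω, 0 ≤ u ω) :
    StronglyMeasurable (fun ω => ∫ t in Set.Ioi (u ω), Real.exp (-(α * t) - β * X (max t 0) ω)) := by
  have hrw : (fun ω => ∫ t in Set.Ioi (u ω), Real.exp (-(α * t) - β * X (max t 0) ω))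
      = fun ω => ∫ t in Set.Ioi (0:ℝ),
          (Set.Ioi (u ω)).indicator (fun t => Real.exp (-(α * t) - β * X (max t 0) ω)) t := by
    funext ω
    rw [integral_indicator measurableSet_Ioi, Measure.restrict_restrict measurableSet_Ioi,
      Set.Ioi_inter_Ioi]
    rw [max_eq_left (hu0 ω)]
  rw [hrw]
  have hF : StronglyMeasurable (fun p : Ω × ℝ =>
      (Set.Ioi (u p.1)).indicator (fun t => Real.exp (-(α * t) - β * X (max t 0) p.1)) p.2) := by
    have hset : MeasurableSet {p : Ω × ℝ | u p.1 < p.2} :=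
      measurableSet_lt (hu.comp measurable_fst) measurable_snd
    have heq : (fun p : Ω × ℝ =>
        (Set.Ioi (u p.1)).indicator (fun t => Real.exp (-(α * t) - β * X (max t 0) p.1)) p.2)
        = fun p : Ω × ℝ => if u p.1 < p.2 then Real.exp (-(α * p.2) - β * X (max p.2 0) p.1)
          else 0 := by
      funext p
      rw [Set.indicator_apply]
      simp [Set.mem_Ioi]
    rw [heq]
    refine Measurable.stronglyMeasurable ?_
    have h1 : Measurable (fun p : Ω × ℝ => X (max p.2 0) p.1) :=
      (jointMeasX hX).comp measurable_swap
    have h2 : Measurable (fun p : Ω × ℝ => Real.exp (-(α * p.2) - β * X (max p.2 0) p.1)) :=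
      Real.measurable_exp.comp (((measurable_snd.const_mul α).neg).sub (h1.const_mul β))
    exact Measurable.ite hset h2 measurable_const
  exact hF.integral_prod_right'

end Core2

section Core3
variable [m0 : MeasurableSpace Ω] {P : Measure Ω} {ℱ : Filtration ℝ m0} {X : ℝ → Ω → ℝ} {x : ℝ}

/-- The key resolvent identity over an event `A ∈ ℱ s`. -/
lemma key_lemma (hX : IsLevy P ℱ X)
    (hmono : ∀ ω, MonotoneOn (fun s => X s ω) (Set.Ici 0))
    (φ : ℝ → ℝ) (hφ0 : ∀ l : ℝ, 0 ≤ l → 0 ≤ φ l)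
    (hφ : ∀ t l : ℝ, 0 ≤ t → 0 ≤ l →
      (∫ ω, Real.exp (-(l * X t ω)) ∂P) = Real.exp (-(t * φ l)))
    {α β : ℝ} (hα : 0 < α) (hβ : 0 ≤ β) {s : ℝ} (hs : 0 ≤ s)
    {A : Set Ω} (hA : MeasurableSet[ℱ s] A) :
    (α + φ β) * ∫ ω in A, (∫ t in Set.Ioi s, Real.exp (-(α * t) - β * X (max t 0) ω)) ∂P
      = ∫ ω in A, Real.exp (-(α * s) - β * X s ω) ∂P := by
  haveI := hX.isProb
  have hAm : MeasurableSet A := ℱ.le s _ hA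
  have hc : 0 < α + φ β := lt_of_lt_of_le hα (le_add_of_nonneg_right (hφ0 β hβ))
  have hbound : ∀ᵐ ω ∂P, ∀ t, ‖Real.exp (-(α * t) - β * X (max t 0) ω)‖ ≤ Real.exp (-(α * t)) := by
    filter_upwards [ae_nonneg hX hmono] with ω hω t
    rw [Real.norm_eq_abs, Real.abs_exp, Real.exp_le_exp]
    nlinarith [mul_nonneg hβ (hω (max t 0) (le_max_right t 0))]
  rw [fubini_swap P hAm (meas_efun hX α β) hα hbound s]
  set C := ∫ ω in A, Real.exp (-(β * X s ω)) ∂P with hC_def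
  have hpt : Set.EqOn (fun t => ∫ ω in A, Real.exp (-(α * t) - β * X (max t 0) ω) ∂P)
      (fun t => (Real.exp (s * φ β) * C) * Real.exp (-((α + φ β) * t))) (Set.Ioi s) := by
    intro t ht
    have hts : s ≤ t := (le_of_lt ht)
    have hmax : max t 0 = t := max_eq_left (le_trans hs hts)
    have hsplit : ∀ ω : Ω, Real.exp (-(α * t) - β * X t ω)
        = Real.exp (-(α * t)) * Real.exp (-(β * X t ω)) := by
      intro ω; rw [← Real.exp_add]; ring_nf
    simp only [hmax]
    calc ∫ ω in A, Real.exp (-(α * t) - β * X t ω) ∂P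
        = ∫ ω in A, Real.exp (-(α * t)) * Real.exp (-(β * X t ω)) ∂P := by
          exact setIntegral_congr_fun hAm fun ω _ => hsplit ω
    _ = Real.exp (-(α * t)) * ∫ ω in A, Real.exp (-(β * X t ω)) ∂P := integral_const_mul _ _
    _ = Real.exp (-(α * t)) * (Real.exp (-((t - s) * φ β)) * C) := by
          rw [inner_factor hX hmono φ hφ hβ hs hts hA]
    _ = (Real.exp (s * φ β) * C) * Real.exp (-((α + φ β) * t)) := by
          have hxx : Real.exp (-(α * t)) * Real.exp (-((t - s) * φ β))
              = Real.exp (s * φ β) * Real.exp (-((α + φ β) * t)) := by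
            rw [← Real.exp_add, ← Real.exp_add]
            ring_nf
          rw [← mul_assoc, hxx]
          ring
  rw [setIntegral_congr_fun measurableSet_Ioi hpt]
  rw [integral_const_mul, integral_exp_neg_mul_Ioi hc s]
  have hsplit2 : Set.EqOn (fun ω => Real.exp (-(α * s) - β * X s ω))
      (fun ω => Real.exp (-(α * s)) * Real.exp (-(β * X s ω))) A := by
    intro ω _
    show Real.exp (-(α * s) - β * X s ω) = Real.exp (-(α * s)) * Real.exp (-(β * X s ω))
    rw [← Real.exp_add]; ring_nf
  rw [setIntegral_congr_fun hAm hsplit2, integral_const_mul]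
  have hxx : Real.exp (s * φ β) * Real.exp (-((α + φ β) * s)) = Real.exp (-(α * s)) := by
    rw [← Real.exp_add]; ring_nf
  rw [div_eq_mul_inv]
  calc (α + φ β) * (Real.exp (s * φ β) * C * (Real.exp (-((α + φ β) * s)) * (α + φ β)⁻¹))
      = (Real.exp (s * φ β) * Real.exp (-((α + φ β) * s))) * C * ((α + φ β) * (α + φ β)⁻¹) := by
        ring
  _ = Real.exp (-(α * s)) * C := by rw [hxx, mul_inv_cancel₀ hc.ne']; ring
end Core3


section Part
variable [m0 : MeasurableSpace Ω] {P : Measure Ω} {ℱ : Filtration ℝ m0} {X : ℝ → Ω → ℝ} {x : ℝ}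

/-- dyadic partition piece of the hitting event -/
def Bset (X : ℝ → Ω → ℝ) (x : ℝ) (n k : ℕ) : Set Ω :=
  {ω | hitsAbove X x ω ∧ ⌈(2:ℝ) ^ n * tauAbove X x ω⌉ = (k : ℤ)}

lemma grid_tau_eq {n k : ℕ} {ω : Ω} (hω : ω ∈ Bset X x n k) :
    grid n (tauAbove X x ω) = (k : ℝ) / 2 ^ n := by
  have h0 : max (tauAbove X x ω) 0 = tauAbove X x ω := max_eq_left (tau_nonneg X x ω)
  rw [grid, h0, hω.2]
  norm_num

lemma Bset_union (n : ℕ) : {ω | hitsAbove X x ω} = ⋃ k : ℕ, Bset X x n k := by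
  ext ω
  simp only [mem_setOf_eq, Set.mem_iUnion, Bset]
  constructor
  · intro hh
    have hnn : (0:ℤ) ≤ ⌈(2:ℝ) ^ n * tauAbove X x ω⌉ :=
      Int.ceil_nonneg (mul_nonneg (two_pow_pos n).le (tau_nonneg X x ω))
    exact ⟨(⌈(2:ℝ) ^ n * tauAbove X x ω⌉).toNat, hh, by rw [Int.toNat_of_nonneg hnn]⟩
  · rintro ⟨k, hh, _⟩; exact hh

lemma Bset_disj (n : ℕ) : Pairwise (Function.onFun Disjoint (Bset X x n)) := by
  intro i j hij
  rw [Function.onFun, Set.disjoint_left]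
  rintro ω ⟨_, hi⟩ ⟨_, hj⟩
  apply hij
  have : (i : ℤ) = (j : ℤ) := hi ▸ hj ▸ rfl
  exact_mod_cast this

lemma Bset_mem_filt (hX : IsLevy P ℱ X)
    (hmono : ∀ ω, MonotoneOn (fun s => X s ω) (Set.Ici 0)) (n k : ℕ) :
    MeasurableSet[ℱ ((k : ℝ) / 2 ^ n)] (Bset X x n k) := by
  cases k with
  | zero =>
    have hEq : Bset X x n 0 = Aset X x 0 := by
      ext ω
      simp only [Bset, Aset, mem_setOf_eq, Nat.cast_zero]
      constructor
      · rintro ⟨hh, hc⟩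
        refine ⟨hh, ?_⟩
        have h1 : (2:ℝ) ^ n * tauAbove X x ω ≤ 0 := by
          have := Int.ceil_eq_zero_iff.1 hc
          exact this.2
        nlinarith [two_pow_pos n, tau_nonneg X x ω]
      · rintro ⟨hh, hc⟩
        have hτ : tauAbove X x ω = 0 := le_antisymm hc (tau_nonneg X x ω)
        refine ⟨hh, ?_⟩
        rw [hτ, mul_zero]
        exact Int.ceil_zero
    rw [hEq]
    have h0 : ((0:ℕ):ℝ) / 2 ^ n = 0 := by simp
    rw [h0]
    exact Aset_mem_filt hX hmono le_rfl
  | succ k =>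
    have h2n := two_pow_pos n
    have hEq : Bset X x n (k + 1)
        = Aset X x (((k:ℝ) + 1) / 2 ^ n) \ Aset X x ((k:ℝ) / 2 ^ n) := by
      ext ω
      simp only [Bset, Aset, Set.mem_diff, mem_setOf_eq, Nat.cast_succ]
      constructor
      · rintro ⟨hh, hc⟩
        have hc2 := Int.ceil_eq_iff.1 hc
        obtain ⟨hlow, hhigh⟩ := hc2
        push_cast at hlow hhigh
        constructor
        · exact ⟨hh, by rw [le_div_iff₀ h2n]; linarith⟩
        · rintro ⟨-, hle⟩
          rw [le_div_iff₀ h2n] at hle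
          linarith
      · rintro ⟨⟨hh, h1⟩, h2⟩
        refine ⟨hh, ?_⟩
        have h1' : (2:ℝ) ^ n * tauAbove X x ω ≤ (k:ℝ) + 1 := by
          rw [le_div_iff₀ h2n] at h1; linarith
        have h2' : (k:ℝ) < (2:ℝ) ^ n * tauAbove X x ω := by
          by_contra hcon
          push_neg at hcon
          exact h2 ⟨hh, by rw [le_div_iff₀ h2n]; linarith⟩
        rw [Int.ceil_eq_iff]
        push_cast
        exact ⟨by linarith, by linarith⟩
    rw [hEq]
    have hk1 : (0:ℝ) ≤ ((k:ℝ) + 1) / 2 ^ n := by positivity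
    have hk0 : (0:ℝ) ≤ (k:ℝ) / 2 ^ n := by positivity
    have hle : (k:ℝ) / 2 ^ n ≤ ((k:ℝ) + 1) / 2 ^ n := by
      rw [div_le_div_iff₀ h2n h2n]
      nlinarith [h2n]
    have hcast : (((k+1:ℕ)):ℝ) / 2 ^ n = ((k:ℝ) + 1) / 2 ^ n := by push_cast; ring
    rw [hcast]
    exact (Aset_mem_filt hX hmono hk1).diff (ℱ.mono hle _ (Aset_mem_filt hX hmono hk0))

lemma Bset_meas (hX : IsLevy P ℱ X)
    (hmono : ∀ ω, MonotoneOn (fun s => X s ω) (Set.Ici 0)) (n k : ℕ) :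
    MeasurableSet (Bset X x n k) :=
  ℱ.le _ _ (Bset_mem_filt hX hmono n k)

lemma J_rw {α β : ℝ} (X : ℝ → Ω → ℝ) {u : ℝ} (hu : 0 ≤ u) (ω : Ω) :
    (∫ t in Set.Ioi u, Real.exp (-(α * t) - β * X (max t 0) ω))
      = ∫ t in Set.Ioi (0:ℝ),
          (Set.Ioi u).indicator (fun t => Real.exp (-(α * t) - β * X (max t 0) ω)) t := by
  rw [integral_indicator measurableSet_Ioi, Measure.restrict_restrict measurableSet_Ioi,
    Set.Ioi_inter_Ioi]
  rw [max_eq_left hu]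

end Part

theorem stmt7 [m0 : MeasurableSpace Ω] (P : Measure Ω) (ℱ : Filtration ℝ m0)
    (X : ℝ → Ω → ℝ) (hX : IsLevy P ℱ X)
    (hmono : ∀ ω, MonotoneOn (fun s => X s ω) (Set.Ici 0))
    (φ : ℝ → ℝ) (hφ0 : ∀ l : ℝ, 0 ≤ l → 0 ≤ φ l)
    (hφ : ∀ t l : ℝ, 0 ≤ t → 0 ≤ l →
      (∫ ω, Real.exp (-(l * X t ω)) ∂P) = Real.exp (-(t * φ l)))
    (α β x : ℝ) (hα : 0 < α) (hβ : 0 ≤ β) (hx : 0 ≤ x) :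
    (∫ ω, (if hitsAbove X x ω then
        Real.exp (-(α * tauAbove X x ω) - β * X (tauAbove X x ω) ω) else 0) ∂P) =
      (α + φ β) * ∫ t in Set.Ioi (0 : ℝ), Real.exp (-(α * t)) *
        (∫ ω, (if x < X t ω then Real.exp (-(β * X t ω)) else 0) ∂P) := by
  classical
  haveI := hX.isProb
  have hHmeas : MeasurableSet {ω : Ω | hitsAbove X x ω} := hits_meas hX hmono
  have hτmeas : Measurable (tauAbove X x) := tau_meas hX hmono
  have hτ0 : ∀ ω : Ω, 0 ≤ tauAbove X x ω := tau_nonneg X x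
  have hGood : ∀ᵐ ω ∂P, ∀ s, 0 ≤ s → 0 ≤ X s ω := ae_nonneg hX hmono
  have hc : 0 < α + φ β := lt_of_lt_of_le hα (le_add_of_nonneg_right (hφ0 β hβ))
  have hu_meas : ∀ n : ℕ, Measurable (fun ω => grid n (tauAbove X x ω)) :=
    fun n => (measurable_grid n).comp hτmeas
  have hu0 : ∀ (n : ℕ) (ω : Ω), 0 ≤ grid n (tauAbove X x ω) := fun n ω => grid_nonneg n _
  have hXu_meas : ∀ n : ℕ, Measurable (fun ω => X (grid n (tauAbove X x ω)) ω) := by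
    intro n
    have h1 : Measurable (fun ω => X (max (grid n (tauAbove X x ω)) 0) ω) :=
      (jointMeasX hX).comp ((hu_meas n).prodMk measurable_id)
    have h2 : (fun ω => X (max (grid n (tauAbove X x ω)) 0) ω)
        = fun ω => X (grid n (tauAbove X x ω)) ω := by
      funext ω; rw [max_eq_left (hu0 n ω)]
    rwa [h2] at h1
  have hg_meas : ∀ n : ℕ, Measurable (Set.indicator {ω : Ω | hitsAbove X x ω}
      (fun ω => Real.exp (-(α * grid n (tauAbove X x ω))
        - β * X (grid n (tauAbove X x ω)) ω))) := fun n =>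
    (Real.measurable_exp.comp ((((hu_meas n).const_mul α).neg).sub
      ((hXu_meas n).const_mul β))).indicator hHmeas
  have hh_meas : ∀ n : ℕ, StronglyMeasurable (Set.indicator {ω : Ω | hitsAbove X x ω}
      (fun ω => ∫ t in Set.Ioi (grid n (tauAbove X x ω)),
        Real.exp (-(α * t) - β * X (max t 0) ω))) := fun n =>
    (meas_J hX α β (hu_meas n) (hu0 n)).indicator hHmeas
  have hlim_meas : StronglyMeasurable (Set.indicator {ω : Ω | hitsAbove X x ω}
      (fun ω => ∫ t in Set.Ioi (tauAbove X x ω),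
        Real.exp (-(α * t) - β * X (max t 0) ω))) :=
    (meas_J hX α β hτmeas hτ0).indicator hHmeas
  -- Step 1 : the discretized identity
  have hC1 : ∀ n : ℕ,
      (∫ ω, Set.indicator {ω : Ω | hitsAbove X x ω}
        (fun ω => Real.exp (-(α * grid n (tauAbove X x ω))
          - β * X (grid n (tauAbove X x ω)) ω)) ω ∂P)
      = (α + φ β) * ∫ ω, Set.indicator {ω : Ω | hitsAbove X x ω}
        (fun ω => ∫ t in Set.Ioi (grid n (tauAbove X x ω)),
          Real.exp (-(α * t) - β * X (max t 0) ω)) ω ∂P := by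
    intro n
    rw [integral_indicator hHmeas, integral_indicator hHmeas]
    rw [Bset_union (X := X) (x := x) n]
    have hfi1 : IntegrableOn (fun ω => Real.exp (-(α * grid n (tauAbove X x ω))
        - β * X (grid n (tauAbove X x ω)) ω)) (⋃ k, Bset X x n k) P := by
      apply Integrable.integrableOn
      refine Integrable.mono' (integrable_const 1)
        (Real.measurable_exp.comp ((((hu_meas n).const_mul α).neg).sub
          ((hXu_meas n).const_mul β))).aestronglyMeasurable ?_
      filter_upwards [hGood] with ω hgood
      rw [Real.norm_eq_abs, Real.abs_exp, Real.exp_le_one_iff]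
      nlinarith [mul_nonneg hβ (hgood _ (hu0 n ω)), mul_nonneg hα.le (hu0 n ω)]
    have hfi2 : IntegrableOn (fun ω => ∫ t in Set.Ioi (grid n (tauAbove X x ω)),
        Real.exp (-(α * t) - β * X (max t 0) ω)) (⋃ k, Bset X x n k) P := by
      apply Integrable.integrableOn
      refine Integrable.mono' (integrable_const (1/α))
        (meas_J hX α β (hu_meas n) (hu0 n)).aestronglyMeasurable ?_
      filter_upwards [hGood] with ω hgood
      rw [Real.norm_eq_abs]
      refine le_trans (J_props hX hα hβ hgood (grid n (tauAbove X x ω))).2 ?_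
      have h1 : Real.exp (-(α * grid n (tauAbove X x ω))) ≤ 1 :=
        Real.exp_le_one_iff.2 (by nlinarith [mul_nonneg hα.le (hu0 n ω)])
      rw [div_le_div_iff₀ hα hα]
      nlinarith [hα]
    rw [integral_iUnion (fun k => Bset_meas hX hmono n k) (Bset_disj n) hfi1]
    rw [integral_iUnion (fun k => Bset_meas hX hmono n k) (Bset_disj n) hfi2]
    rw [← tsum_mul_left]
    refine tsum_congr fun k => ?_
    have hk0 : (0:ℝ) ≤ (k:ℝ) / 2 ^ n := by positivity
    have hEq1 : Set.EqOn (fun ω => Real.exp (-(α * grid n (tauAbove X x ω))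
        - β * X (grid n (tauAbove X x ω)) ω))
        (fun ω => Real.exp (-(α * ((k:ℝ) / 2 ^ n)) - β * X ((k:ℝ) / 2 ^ n) ω))
        (Bset X x n k) := by
      intro ω hω
      simp only
      rw [grid_tau_eq hω]
    have hEq2 : Set.EqOn (fun ω => ∫ t in Set.Ioi (grid n (tauAbove X x ω)),
        Real.exp (-(α * t) - β * X (max t 0) ω))
        (fun ω => ∫ t in Set.Ioi ((k:ℝ) / 2 ^ n),
          Real.exp (-(α * t) - β * X (max t 0) ω)) (Bset X x n k) := by
      intro ω hω
      simp only
      rw [grid_tau_eq hω]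
    rw [setIntegral_congr_fun (Bset_meas hX hmono n k) hEq1,
      setIntegral_congr_fun (Bset_meas hX hmono n k) hEq2]
    exact (key_lemma hX hmono φ hφ0 hφ hα hβ hk0 (Bset_mem_filt hX hmono n k)).symm
  -- Step 2 : convergence of the LHS approximations
  have hC2 : Tendsto (fun n : ℕ => ∫ ω, Set.indicator {ω : Ω | hitsAbove X x ω}
      (fun ω => Real.exp (-(α * grid n (tauAbove X x ω))
        - β * X (grid n (tauAbove X x ω)) ω)) ω ∂P) atTop
      (nhds (∫ ω, (if hitsAbove X x ω then
        Real.exp (-(α * tauAbove X x ω) - β * X (tauAbove X x ω) ω) else 0) ∂P)) := by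
    refine tendsto_integral_of_dominated_convergence (fun _ => (1:ℝ))
      (fun n => (hg_meas n).aestronglyMeasurable) (integrable_const 1) ?_ ?_
    · intro n
      filter_upwards [hGood] with ω hgood
      by_cases hω : ω ∈ {ω : Ω | hitsAbove X x ω}
      · rw [Set.indicator_of_mem hω, Real.norm_eq_abs, Real.abs_exp, Real.exp_le_one_iff]
        nlinarith [mul_nonneg hβ (hgood _ (hu0 n ω)), mul_nonneg hα.le (hu0 n ω)]
      · rw [Set.indicator_of_notMem hω]; simp
    · filter_upwards [hGood] with ω hgood
      by_cases hω : hitsAbove X x ω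
      · have hmem : ω ∈ {ω : Ω | hitsAbove X x ω} := hω
        simp only [Set.indicator_of_mem hmem]
        rw [if_pos hω]
        have hmax : max (tauAbove X x ω) 0 = tauAbove X x ω := max_eq_left (hτ0 ω)
        have hgt : Tendsto (fun n => grid n (tauAbove X x ω)) atTop
            (nhdsWithin (tauAbove X x ω) (Set.Ici (tauAbove X x ω))) := by
          have := tendsto_grid (tauAbove X x ω)
          rwa [hmax] at this
        have hXt : Tendsto (fun n => X (grid n (tauAbove X x ω)) ω) atTop
            (nhds (X (tauAbove X x ω) ω)) :=
          Tendsto.comp (hX.rightCont ω (tauAbove X x ω) (hτ0 ω)) hgt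
        have hgt' : Tendsto (fun n => grid n (tauAbove X x ω)) atTop
            (nhds (tauAbove X x ω)) := hgt.mono_right nhdsWithin_le_nhds
        have hexp : Tendsto (fun n => -(α * grid n (tauAbove X x ω))
            - β * X (grid n (tauAbove X x ω)) ω) atTop
            (nhds (-(α * tauAbove X x ω) - β * X (tauAbove X x ω) ω)) :=
          ((hgt'.const_mul α).neg).sub (hXt.const_mul β)
        exact Real.continuous_exp.continuousAt.tendsto.comp hexp
      · have hmem : ω ∉ {ω : Ω | hitsAbove X x ω} := hω
        simp only [Set.indicator_of_notMem hmem]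
        rw [if_neg hω]
        exact tendsto_const_nhds
  -- Step 3 : convergence of the RHS approximations
  have hC3 : Tendsto (fun n : ℕ => ∫ ω, Set.indicator {ω : Ω | hitsAbove X x ω}
      (fun ω => ∫ t in Set.Ioi (grid n (tauAbove X x ω)),
        Real.exp (-(α * t) - β * X (max t 0) ω)) ω ∂P) atTop
      (nhds (∫ ω, Set.indicator {ω : Ω | hitsAbove X x ω}
        (fun ω => ∫ t in Set.Ioi (tauAbove X x ω),
          Real.exp (-(α * t) - β * X (max t 0) ω)) ω ∂P)) := by
    refine tendsto_integral_of_dominated_convergence (fun _ => 1 / α)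
      (fun n => (hh_meas n).aestronglyMeasurable) (integrable_const (1/α)) ?_ ?_
    · intro n
      filter_upwards [hGood] with ω hgood
      by_cases hω : ω ∈ {ω : Ω | hitsAbove X x ω}
      · rw [Set.indicator_of_mem hω, Real.norm_eq_abs]
        refine le_trans (J_props hX hα hβ hgood (grid n (tauAbove X x ω))).2 ?_
        have h1 : Real.exp (-(α * grid n (tauAbove X x ω))) ≤ 1 :=
          Real.exp_le_one_iff.2 (by nlinarith [mul_nonneg hα.le (hu0 n ω)])
        rw [div_le_div_iff₀ hα hα]
        nlinarith [hα]
      · rw [Set.indicator_of_notMem hω]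
        simp [le_of_lt, hα, one_div_pos.2 hα]
    · filter_upwards [hGood] with ω hgood
      by_cases hω : ω ∈ {ω : Ω | hitsAbove X x ω}
      · simp only [Set.indicator_of_mem hω]
        have hmax : max (tauAbove X x ω) 0 = tauAbove X x ω := max_eq_left (hτ0 ω)
        have hIτ : IntegrableOn (fun t => Real.exp (-(α * t) - β * X (max t 0) ω))
            (Set.Ioi (tauAbove X x ω)) volume := (J_props hX hα hβ hgood _).1
        have hkey : ∀ n : ℕ,
            ‖(∫ t in Set.Ioi (grid n (tauAbove X x ω)),
              Real.exp (-(α * t) - β * X (max t 0) ω))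
              - ∫ t in Set.Ioi (tauAbove X x ω),
                Real.exp (-(α * t) - β * X (max t 0) ω)‖ ≤ ((2:ℝ) ^ n)⁻¹ := by
          intro n
          have hτg : tauAbove X x ω ≤ grid n (tauAbove X x ω) := by
            have := le_grid n (tauAbove X x ω)
            rwa [hmax] at this
          have hsplitset : Set.Ioc (tauAbove X x ω) (grid n (tauAbove X x ω))
              ∪ Set.Ioi (grid n (tauAbove X x ω)) = Set.Ioi (tauAbove X x ω) :=
            Set.Ioc_union_Ioi_eq_Ioi hτg
          have h1 : IntegrableOn (fun t => Real.exp (-(α * t) - β * X (max t 0) ω))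
              (Set.Ioc (tauAbove X x ω) (grid n (tauAbove X x ω))) volume :=
            hIτ.mono_set Set.Ioc_subset_Ioi_self
          have h2 : IntegrableOn (fun t => Real.exp (-(α * t) - β * X (max t 0) ω))
              (Set.Ioi (grid n (tauAbove X x ω))) volume :=
            hIτ.mono_set (Set.Ioi_subset_Ioi hτg)
          have hJsplit : (∫ t in Set.Ioi (tauAbove X x ω),
              Real.exp (-(α * t) - β * X (max t 0) ω))
              = (∫ t in Set.Ioc (tauAbove X x ω) (grid n (tauAbove X x ω)),
                  Real.exp (-(α * t) - β * X (max t 0) ω))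
                + ∫ t in Set.Ioi (grid n (tauAbove X x ω)),
                  Real.exp (-(α * t) - β * X (max t 0) ω) := by
            rw [← hsplitset, setIntegral_union Set.Ioc_disjoint_Ioi_same measurableSet_Ioi h1 h2]
          have hIocbound : ‖∫ t in Set.Ioc (tauAbove X x ω) (grid n (tauAbove X x ω)),
              Real.exp (-(α * t) - β * X (max t 0) ω)‖ ≤ ((2:ℝ) ^ n)⁻¹ := by
            have hb : ∀ᵐ t ∂(volume.restrict
                (Set.Ioc (tauAbove X x ω) (grid n (tauAbove X x ω)))),
                ‖Real.exp (-(α * t) - β * X (max t 0) ω)‖ ≤ 1 := by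
              refine (ae_restrict_iff' measurableSet_Ioc).2
                (Filter.Eventually.of_forall fun t ht => ?_)
              rw [Real.norm_eq_abs, Real.abs_exp, Real.exp_le_one_iff]
              have ht0 : 0 ≤ t := le_trans (hτ0 ω) ht.1.le
              nlinarith [mul_nonneg hβ (hgood (max t 0) (le_max_right t 0)),
                mul_nonneg hα.le ht0]
            have h3 : ‖∫ t in Set.Ioc (tauAbove X x ω) (grid n (tauAbove X x ω)),
                Real.exp (-(α * t) - β * X (max t 0) ω)‖
                ≤ ∫ _ in Set.Ioc (tauAbove X x ω) (grid n (tauAbove X x ω)), (1:ℝ) :=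
              norm_integral_le_of_norm_le
                (integrableOn_const measure_Ioc_lt_top.ne) hb
            rw [setIntegral_const, Real.volume_real_Ioc_of_le hτg, smul_eq_mul, mul_one] at h3
            refine le_trans h3 ?_
            have := grid_le n (tauAbove X x ω)
            rw [hmax] at this
            linarith
          calc ‖(∫ t in Set.Ioi (grid n (tauAbove X x ω)),
              Real.exp (-(α * t) - β * X (max t 0) ω))
              - ∫ t in Set.Ioi (tauAbove X x ω),
                Real.exp (-(α * t) - β * X (max t 0) ω)‖
              = ‖∫ t in Set.Ioc (tauAbove X x ω) (grid n (tauAbove X x ω)),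
                Real.exp (-(α * t) - β * X (max t 0) ω)‖ := by
                rw [hJsplit]
                simp [norm_neg]
          _ ≤ ((2:ℝ) ^ n)⁻¹ := hIocbound
        have hinv0 : Tendsto (fun n : ℕ => ((2:ℝ) ^ n)⁻¹) atTop (nhds 0) := by
          exact tendsto_inv_atTop_zero.comp
            (tendsto_pow_atTop_atTop_of_one_lt (one_lt_two (α := ℝ)))
        exact tendsto_sub_nhds_zero_iff.1 (squeeze_zero_norm hkey hinv0)
      · simp only [Set.indicator_of_notMem hω]
        exact tendsto_const_nhds
  -- Step 4 : identification of the limit of the RHS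
  have hq_meas : Measurable (fun p : ℝ × Ω => if x < X (max p.1 0) p.2 then
      Real.exp (-(α * p.1) - β * X (max p.1 0) p.2) else 0) := by
    refine Measurable.ite ?_ (meas_efun hX α β) measurable_const
    exact (jointMeasX hX) measurableSet_Ioi
  have hC4 : (∫ ω, Set.indicator {ω : Ω | hitsAbove X x ω}
      (fun ω => ∫ t in Set.Ioi (tauAbove X x ω),
        Real.exp (-(α * t) - β * X (max t 0) ω)) ω ∂P)
      = ∫ t in Set.Ioi (0:ℝ), Real.exp (-(α * t)) *
        (∫ ω, (if x < X t ω then Real.exp (-(β * X t ω)) else 0) ∂P) := by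
    have hstepA : (Set.indicator {ω : Ω | hitsAbove X x ω}
        (fun ω => ∫ t in Set.Ioi (tauAbove X x ω),
          Real.exp (-(α * t) - β * X (max t 0) ω)))
        =ᵐ[P] fun ω => ∫ t in Set.Ioi (0:ℝ),
          (if x < X (max t 0) ω then Real.exp (-(α * t) - β * X (max t 0) ω) else 0) := by
      filter_upwards [hGood] with ω hgood
      by_cases hω : ω ∈ {ω : Ω | hitsAbove X x ω}
      · rw [Set.indicator_of_mem hω]
        rw [J_rw X (hτ0 ω) ω]
        refine integral_congr_ae ?_
        have hne : ∀ᵐ t ∂(volume.restrict (Set.Ioi (0:ℝ))), t ≠ tauAbove X x ω := by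
          refine ae_restrict_of_ae ?_
          rw [ae_iff]
          have : {t : ℝ | ¬t ≠ tauAbove X x ω} = {tauAbove X x ω} := by ext t; simp
          rw [this]
          exact Real.volume_singleton
        filter_upwards [hne, ae_restrict_mem measurableSet_Ioi] with t htne htmem
        have ht0 : (0:ℝ) < t := htmem
        have hmaxt : max t 0 = t := max_eq_left ht0.le
        by_cases hgt : tauAbove X x ω < t
        · rw [Set.indicator_of_mem (by exact hgt : t ∈ Set.Ioi (tauAbove X x ω))]
          have hxt : x < X t ω := lt_X_of_tau_lt (hmono ω) hω hgt
          rw [hmaxt, if_pos hxt]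
        · push_neg at hgt
          have hlt : t < tauAbove X x ω := lt_of_le_of_ne hgt htne
          have hnotmem : t ∉ Set.Ioi (tauAbove X x ω) := by
            simp only [Set.mem_Ioi, not_lt]
            exact hgt
          rw [Set.indicator_of_notMem hnotmem]
          have hnx : ¬(x < X t ω) := fun hcon =>
            absurd (hits_and_tau_le (x := x) t ht0.le hcon).2 (not_le.2 hlt)
          rw [hmaxt, if_neg hnx]
      · rw [Set.indicator_of_notMem hω]
        symm
        have hzero : Set.EqOn (fun t => if x < X (max t 0) ω then
            Real.exp (-(α * t) - β * X (max t 0) ω) else 0) (fun _ => (0:ℝ)) (Set.Ioi 0) := by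
          intro t ht
          simp only
          rw [if_neg]
          intro hcon
          exact hω ⟨max t 0, le_max_right t 0, hcon⟩
        rw [setIntegral_congr_fun measurableSet_Ioi hzero, integral_zero]
    rw [integral_congr_ae hstepA]
    have hbq : ∀ᵐ ω ∂P, ∀ t, ‖if x < X (max t 0) ω then
        Real.exp (-(α * t) - β * X (max t 0) ω) else 0‖ ≤ Real.exp (-(α * t)) := by
      filter_upwards [hGood] with ω hgood t
      by_cases hcond : x < X (max t 0) ω
      · rw [if_pos hcond, Real.norm_eq_abs, Real.abs_exp, Real.exp_le_exp]
        nlinarith [mul_nonneg hβ (hgood (max t 0) (le_max_right t 0))]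
      · rw [if_neg hcond]
        simp [(Real.exp_pos _).le]
    have hswap := fubini_swap P MeasurableSet.univ hq_meas hα hbq 0
    simp only [Measure.restrict_univ] at hswap
    rw [hswap]
    refine setIntegral_congr_fun measurableSet_Ioi fun t ht => ?_
    have hmaxt : max t 0 = t := max_eq_left (le_of_lt ht)
    simp only [hmaxt]
    have hpt : ∀ ω, (if x < X t ω then Real.exp (-(α * t) - β * X t ω) else 0)
        = Real.exp (-(α * t)) * (if x < X t ω then Real.exp (-(β * X t ω)) else 0) := by
      intro ω
      by_cases hcond : x < X t ω
      · rw [if_pos hcond, if_pos hcond, ← Real.exp_add]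
        ring_nf
      · rw [if_neg hcond, if_neg hcond, mul_zero]
    rw [show (fun ω => if x < X t ω then Real.exp (-(α * t) - β * X t ω) else 0)
        = fun ω => Real.exp (-(α * t)) * (if x < X t ω then Real.exp (-(β * X t ω)) else 0)
        from funext hpt]
    rw [integral_const_mul]
  -- assemble
  have hT2 := hC2
  rw [show (fun n : ℕ => ∫ ω, Set.indicator {ω : Ω | hitsAbove X x ω}
      (fun ω => Real.exp (-(α * grid n (tauAbove X x ω))
        - β * X (grid n (tauAbove X x ω)) ω)) ω ∂P)
      = fun n : ℕ => (α + φ β) * ∫ ω, Set.indicator {ω : Ω | hitsAbove X x ω}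
        (fun ω => ∫ t in Set.Ioi (grid n (tauAbove X x ω)),
          Real.exp (-(α * t) - β * X (max t 0) ω)) ω ∂P from funext hC1] at hT2
  have hT3 := hC3.const_mul (α + φ β)
  have hfinal := tendsto_nhds_unique hT2 hT3
  rw [hfinal, hC4]

end AKLevy
end
end

section
/- (Verification lemma.) Let (Ω, F, (F_t)_{t ≥ 0}, ℙ) be a filtered probability space satisfying the usual conditions, X an adapted real-valued process with right-continuous paths and X_0 = 0 a.s., r > 0, K > 0, and G(z) = (K − e^z)^+. Fix y ∈ ℝ and for each x ∈ ℝ set σ_x = inf{t ≥ 0 : x + X_t < y} (inf ∅ = ∞). Let V : ℝ → ℝ be bounded and continuous, and assume: (i) for every x, the process t ↦ e^{−r (t ∧ σ_x)} V(x + X_{t ∧ σ_x}) is a martingale with respect to (F_t); (ii) for every x, the process t ↦ e^{−r t} V(x + X_t) is a supermartingale with respect to (F_t); (iii) V(z) = G(z) for all z ≤ y; (iv) V(z) ≥ G(z) for all z ∈ ℝ. Then for every x ∈ ℝ, V(x) = sup_{τ} E[e^{−r τ} G(x + X_τ) 1_{{τ < ∞}}], the supremum being over all stopping times τ : Ω →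 [0, ∞], and the supremum is attained at τ = σ_x. -/
open MeasureTheory ProbabilityTheory Set Filter
open scoped ENNReal NNReal Classical

noncomputable section

namespace AKLevy

variable {Ω : Type*}

open Topology

/-! ### Auxiliary lemmas for Statement 15 -/

section Stmt15Aux

variable [m0 : MeasurableSpace Ω]

/-- Nonnegativity of the first passage time. -/
theorem hitInf_nonneg (X : ℝ → Ω → ℝ) (y x : ℝ) (ω : Ω) :
    0 ≤ sInf {t : ℝ | 0 ≤ t ∧ x + X t ω < y} :=
  Real.sInf_nonneg fun _ ht => ht.1

/-- At the first passage time below `y`, the process is `≤ y` (by right continuity). -/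
theorem sInf_hit_le (X : ℝ → Ω → ℝ)
    (hRC : ∀ ω, ∀ t : ℝ, 0 ≤ t → ContinuousWithinAt (fun s => X s ω) (Set.Ici t) t)
    (y x : ℝ) (ω : Ω) (hne : ∃ t, 0 ≤ t ∧ x + X t ω < y) :
    x + X (sInf {t : ℝ | 0 ≤ t ∧ x + X t ω < y}) ω ≤ y := by
  set S := {t : ℝ | 0 ≤ t ∧ x + X t ω < y} with hS
  have hSne : S.Nonempty := hne
  have hbdd : BddBelow S := ⟨0, fun t ht => ht.1⟩
  set s := sInf S with hs
  have hs0 : 0 ≤ s := Real.sInf_nonneg fun _ ht => ht.1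
  by_contra hlt
  push_neg at hlt
  have hadd : ContinuousWithinAt (fun v => x + X v ω) (Set.Ici s) s :=
    continuousWithinAt_const.add (hRC ω s hs0)
  have hmem := hadd (Ioi_mem_nhds hlt)
  rw [Filter.mem_map, Metric.mem_nhdsWithin_iff] at hmem
  obtain ⟨ε, hε, hsub⟩ := hmem
  obtain ⟨u, huS, hult⟩ := (csInf_lt_iff hbdd hSne).1
    (show sInf S < s + ε by rw [← hs]; linarith)
  have hus : s ≤ u := csInf_le hbdd huS
  have : u ∈ Metric.ball s ε ∩ Set.Ici s := by
    constructor
    · rw [Metric.mem_ball, Real.dist_eq, abs_of_nonneg (by linarith)]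
      linarith
    · exact hus
  have := hsub this
  simp only [Set.mem_preimage, Set.mem_Ioi] at this
  exact absurd huS.2 (by linarith)

/-- The first passage time below a level is a stopping time. -/
theorem isStopTime_hitBelowE (ℱ : Filtration ℝ m0)
    (hfiltRC : ∀ t : ℝ, (ℱ t : MeasurableSpace Ω) = ⨅ s ∈ Set.Ioi t, (ℱ s : MeasurableSpace Ω))
    (X : ℝ → Ω → ℝ)
    (hAdapted : ∀ t : ℝ, 0 ≤ t → StronglyMeasurable[ℱ t] (X t))
    (hRC : ∀ ω, ∀ t : ℝ, 0 ≤ t → ContinuousWithinAt (fun s => X s ω) (Set.Ici t) t) :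
    ∀ y x : ℝ, IsStopTime ℱ (hitBelowE X y x) := by
  intro y x t ht
  set A : ℕ → Set Ω := fun n =>
    ⋃ (q : ℚ) (_ : 0 ≤ (q : ℝ) ∧ (q : ℝ) < t + 1 / (n + 1)), {ω | x + X (q : ℝ) ω < y} with hA
  have hAmeas : ∀ (n : ℕ) (u : ℝ), t + 1 / (n + 1) ≤ u → MeasurableSet[ℱ u] (A n) := by
    intro n u hu
    refine MeasurableSet.iUnion fun q => MeasurableSet.iUnion fun hq => ?_
    have hql : (q : ℝ) ≤ u := le_trans hq.2.le hu
    have hmq : MeasurableSet[ℱ (q : ℝ)] {ω | x + X (q : ℝ) ω < y} :=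
      (measurable_const.add (hAdapted _ hq.1).measurable) measurableSet_Iio
    exact ℱ.mono hql _ hmq
  have hanti : ∀ m n : ℕ, m ≤ n → A n ⊆ A m := by
    intro m n hmn
    refine Set.iUnion_mono fun q => Set.iUnion_mono' fun hq => ?_
    refine ⟨⟨hq.1, lt_of_lt_of_le hq.2 ?_⟩, subset_rfl⟩
    have h1 : (1 : ℝ) / (n + 1) ≤ 1 / (m + 1) := by
      apply one_div_le_one_div_of_le
      · positivity
      · push_cast; exact_mod_cast by exact_mod_cast add_le_add_left (by exact_mod_cast hmn : (m:ℝ) ≤ n) 1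
    linarith
  have hset : {ω | hitBelowE X y x ω ≤ ENNReal.ofReal t} = ⋂ n, A n := by
    ext ω
    simp only [Set.mem_setOf_eq, Set.mem_iInter, hA, Set.mem_iUnion, Set.mem_setOf_eq]
    constructor
    · intro h n
      rw [hitBelowE] at h
      split_ifs at h with hne
      · set S := {t' : ℝ | 0 ≤ t' ∧ x + X t' ω < y} with hS
        have hSne : S.Nonempty := hne
        have hbdd : BddBelow S := ⟨0, fun u hu => hu.1⟩
        have hle : sInf S ≤ t := (ENNReal.ofReal_le_ofReal_iff ht).1 h
        have hpos : (0 : ℝ) < 1 / (n + 1) := by positivity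
        obtain ⟨u, huS, hult⟩ := (csInf_lt_iff hbdd hSne).1
          (show sInf S < t + 1 / (n + 1) by linarith)
        have hadd : ContinuousWithinAt (fun v => x + X v ω) (Set.Ici u) u :=
          continuousWithinAt_const.add (hRC ω u huS.1)
        have hmem := hadd (Iio_mem_nhds huS.2)
        rw [Filter.mem_map, Metric.mem_nhdsWithin_iff] at hmem
        obtain ⟨ε, hε, hsub⟩ := hmem
        obtain ⟨q, hq1, hq2⟩ := exists_rat_btwn
          (show u < min (u + ε) (t + 1 / (n + 1)) by
            apply lt_min
            · linarith
            · exact hult)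
        have hball : (q : ℝ) ∈ Metric.ball u ε ∩ Set.Ici u := by
          constructor
          · rw [Metric.mem_ball, Real.dist_eq, abs_of_pos (sub_pos.2 hq1)]
            have := lt_of_lt_of_le hq2 (min_le_left _ _)
            linarith
          · exact hq1.le
        have hqy := hsub hball
        simp only [Set.mem_preimage, Set.mem_Iio] at hqy
        exact ⟨q, ⟨le_trans huS.1 hq1.le, lt_of_lt_of_le hq2 (min_le_right _ _)⟩, hqy⟩
      · exact absurd h (by simp)
    · intro h
      rw [hitBelowE]
      have hne : ∃ t', 0 ≤ t' ∧ x + X t' ω < y := by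
        obtain ⟨q, hq, hqy⟩ := h 0
        exact ⟨q, hq.1, hqy⟩
      rw [if_pos hne]
      refine le_trans (ENNReal.ofReal_le_ofReal ?_) le_rfl
      by_contra hc
      push_neg at hc
      obtain ⟨n, hn⟩ := exists_nat_one_div_lt (sub_pos.2 hc)
      obtain ⟨q, hq, hqy⟩ := h n
      have hqS : sInf {t' : ℝ | 0 ≤ t' ∧ x + X t' ω < y} ≤ q :=
        csInf_le ⟨0, fun u hu => hu.1⟩ ⟨hq.1, hqy⟩
      have := hq.2
      linarith
  rw [hset, hfiltRC t]
  refine MeasurableSpace.measurableSet_iInf.2 fun u =>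
    MeasurableSpace.measurableSet_iInf.2 fun hu => ?_
  obtain ⟨n, hn⟩ := exists_nat_one_div_lt (sub_pos.2 (show t < u from hu))
  have hrw : (⋂ m, A m) = ⋂ m, A (n + m) := by
    apply Set.Subset.antisymm
    · exact Set.subset_iInter fun m => Set.iInter_subset A (n + m)
    · exact Set.subset_iInter fun m =>
        (Set.iInter_subset (fun k => A (n + k)) m).trans (hanti m (n + m) (Nat.le_add_left m n))
  rw [hrw]
  refine MeasurableSet.iInter fun m => hAmeas (n + m) u ?_
  have h1 : (1 : ℝ) / ((n : ℝ) + (m : ℝ) + 1) ≤ 1 / ((n : ℝ) + 1) := by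
    apply one_div_le_one_div_of_le
    · positivity
    · have : (0:ℝ) ≤ (m : ℝ) := m.cast_nonneg
      linarith
  push_cast
  linarith

/-- Dyadic discretization (from above) of a `[0,∞]`-valued time, capped at `n`. -/
def discT (τ : Ω → ℝ≥0∞) (n : ℕ) (ω : Ω) : ℕ :=
  min (n * 2 ^ n) (if τ ω = ∞ then n * 2 ^ n else ⌈(τ ω).toReal * 2 ^ n⌉₊)

/-- The dyadic grid filtration at level `n`. -/
def gridFilt (ℱ : Filtration ℝ m0) (n : ℕ) : Filtration ℕ m0 where
  seq k := ℱ ((k : ℝ) / 2 ^ n)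
  mono' k l hkl := ℱ.mono (by
    have h2 : (0 : ℝ) < 2 ^ n := by positivity
    exact (div_le_div_iff_of_pos_right h2).mpr (by exact_mod_cast hkl))
  le' k := ℱ.le _

/-- The expected discounted payoff of any stopping time is at most `V x`
(optional stopping via dyadic discretization). -/
theorem integral_payoff_le (P : Measure Ω) [IsProbabilityMeasure P]
    (ℱ : Filtration ℝ m0) (X : ℝ → Ω → ℝ)
    (hRC : ∀ ω, ∀ t : ℝ, 0 ≤ t → ContinuousWithinAt (fun s => X s ω) (Set.Ici t) t)
    (h0 : ∀ᵐ ω ∂P, X 0 ω = 0)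
    (r K x : ℝ) (hr : 0 < r) (V : ℝ → ℝ) (C : ℝ) (hVb : ∀ z, |V z| ≤ C)
    (hVcont : Continuous V)
    (hsuper : SupermartOn P ℱ (fun t ω => Real.exp (-(r * t)) * V (x + X t ω)))
    (hdom : ∀ z : ℝ, max (K - Real.exp z) 0 ≤ V z)
    (τ : Ω → ℝ≥0∞) (hτ : IsStopTime ℱ τ) :
    ∫ ω, stopPayoff X r x (fun z => max (K - Real.exp z) 0) τ ω ∂P ≤ V x := by
  obtain ⟨hm, hi, hc⟩ := hsuper
  set f : ℝ → Ω → ℝ := fun t ω => Real.exp (-(r * t)) * V (x + X t ω) with hfdef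
  have h2n : ∀ n : ℕ, (0 : ℝ) < 2 ^ n := fun n => by positivity
  have hgrid0 : ∀ n k : ℕ, (0 : ℝ) ≤ (k : ℝ) / 2 ^ n := fun n k => by positivity
  have hfb : ∀ (t : ℝ) (ω : Ω), 0 ≤ t → |f t ω| ≤ C := by
    intro t ω ht
    simp only [hfdef]
    rw [abs_mul, abs_of_pos (Real.exp_pos _)]
    calc Real.exp (-(r * t)) * |V (x + X t ω)| ≤ 1 * C := by
          apply mul_le_mul _ (hVb _) (abs_nonneg _) zero_le_one
          rw [Real.exp_le_one_iff]
          nlinarith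
      _ = C := one_mul C
  -- the discrete supermartingale on the dyadic grid
  have hY : ∀ n : ℕ, Supermartingale (fun (k : ℕ) ω => f ((k : ℝ) / 2 ^ n) ω)
      (gridFilt ℱ n) P := by
    intro n
    refine ⟨fun k => hm _ (hgrid0 n k), fun i j hij => ?_, fun k => hi _ (hgrid0 n k)⟩
    refine hc _ _ (hgrid0 n i) ?_
    exact (div_le_div_iff_of_pos_right (h2n n)).mpr (by exact_mod_cast hij)
  -- the discretized stopping time
  have hκst : ∀ n, IsStoppingTime (gridFilt ℱ n) (fun ω => WithTop.some (discT τ n ω)) := by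
    intro n k
    simp only [WithTop.coe_le_coe]
    by_cases hk : n * 2 ^ n ≤ k
    · have : {ω | discT τ n ω ≤ k} = Set.univ :=
        Set.eq_univ_of_forall fun ω => le_trans (min_le_left _ _) hk
      rw [this]
      exact MeasurableSet.univ
    · have hset : {ω | discT τ n ω ≤ k} = {ω | τ ω ≤ ENNReal.ofReal ((k : ℝ) / 2 ^ n)} := by
        ext ω
        simp only [discT, Set.mem_setOf_eq, min_le_iff]
        constructor
        · rintro (h | h)
          · omega
          · by_cases hτω : τ ω = ∞
            · rw [if_pos hτω] at h
              omega
            · rw [if_neg hτω, Nat.ceil_le] at h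
              rw [ENNReal.le_ofReal_iff_toReal_le hτω (hgrid0 n k), le_div_iff₀ (h2n n)]
              exact h
        · intro h
          have hτω : τ ω ≠ ∞ := by
            intro he
            rw [he] at h
            exact absurd h (by simp)
          right
          rw [if_neg hτω, Nat.ceil_le, ← le_div_iff₀ (h2n n)]
          exact (ENNReal.le_ofReal_iff_toReal_le hτω (hgrid0 n k)).1 h
      rw [hset]
      exact hτ _ (hgrid0 n k)
  -- optional stopping at the discretized time
  have hf0int : ∫ ω, f 0 ω ∂P = V x := by
    have heq : (fun ω => f 0 ω) =ᵐ[P] fun _ => V x := by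
      filter_upwards [h0] with ω hω
      simp only [hfdef]
      rw [hω]
      simp
    rw [integral_congr_ae heq, integral_const]
    simp
  set g : ℕ → Ω → ℝ :=
    fun n => MeasureTheory.stoppedValue (fun (k : ℕ) ω => f ((k : ℝ) / 2 ^ n) ω) (fun ω => WithTop.some (discT τ n ω))
    with hgdef
  have hOS : ∀ n, ∫ ω, g n ω ∂P ≤ V x := by
    intro n
    have hsub := (hY n).neg
    have h := hsub.expected_stoppedValue_mono (isStoppingTime_const (gridFilt ℱ n) 0)
      (hκst n) (fun ω => WithTop.coe_le_coe.2 (Nat.zero_le _)) (N := n * 2 ^ n) (fun ω => WithTop.coe_le_coe.2 (min_le_left _ _))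
    have e1 : MeasureTheory.stoppedValue
        (-fun (k : ℕ) ω => f ((k : ℝ) / 2 ^ n) ω) (fun _ => WithTop.some (0 : ℕ)) =
        fun ω => -(f 0 ω) := by
      funext ω
      simp [MeasureTheory.stoppedValue]
    have e2 : MeasureTheory.stoppedValue
        (-fun (k : ℕ) ω => f ((k : ℝ) / 2 ^ n) ω) (fun ω => WithTop.some (discT τ n ω)) = fun ω => -(g n ω) := by
      funext ω
      simp [MeasureTheory.stoppedValue, hgdef]
    rw [e1, e2, integral_neg, integral_neg, neg_le_neg_iff] at h
    exact le_trans h (le_of_eq hf0int)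
  have hgint : ∀ n, Integrable (g n) P := fun n =>
    MeasureTheory.integrable_stoppedValue ℕ (hκst n) (fun k => hi _ (hgrid0 n k))
      (fun ω => WithTop.coe_le_coe.2 (min_le_left _ _))
  have hgb : ∀ n ω, ‖g n ω‖ ≤ C := by
    intro n ω
    rw [Real.norm_eq_abs]
    exact hfb _ _ (hgrid0 n _)
  -- the limit function
  set Λ : Ω → ℝ := fun ω => if τ ω ≠ ∞ then f (τ ω).toReal ω else 0 with hΛdef
  have hC0 : (0 : ℝ) ≤ C := le_trans (abs_nonneg _) (hVb 0)
  -- pointwise convergence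
  have hlim : ∀ ω, Tendsto (fun n => g n ω) atTop (𝓝 (Λ ω)) := by
    intro ω
    by_cases hτω : τ ω = ∞
    · have hgn : ∀ n : ℕ, g n ω = f ((n : ℝ)) ω := by
        intro n
        have hd : discT τ n ω = n * 2 ^ n := by
          rw [discT, if_pos hτω, min_self]
        simp only [hgdef, MeasureTheory.stoppedValue, hd, WithTop.untopA, WithTop.untopD_coe]
        congr 1
        push_cast
        field_simp
      have hΛω : Λ ω = 0 := by
        simp only [hΛdef]
        simp [hτω]
      rw [hΛω]
      apply squeeze_zero_norm (a := fun n : ℕ => Real.exp (-r) ^ n * C)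
      · intro n
        rw [hgn n, Real.norm_eq_abs]
        simp only [hfdef]
        rw [abs_mul, abs_of_pos (Real.exp_pos _)]
        have h1 : Real.exp (-(r * n)) = Real.exp (-r) ^ n := by
          rw [← Real.exp_nat_mul]
          ring_nf
        rw [h1]
        exact mul_le_mul_of_nonneg_left (hVb _) (pow_nonneg (Real.exp_pos _).le _)
      · have := (tendsto_pow_atTop_nhds_zero_of_lt_one (Real.exp_pos (-r)).le
          (Real.exp_lt_one_iff.mpr (by linarith))).mul_const C
        simpa using this
    · set s := (τ ω).toReal with hsdef
      have hs0 : 0 ≤ s := ENNReal.toReal_nonneg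
      set tn : ℕ → ℝ := fun n => (⌈s * 2 ^ n⌉₊ : ℝ) / 2 ^ n with htndef
      have htlb : ∀ n, s ≤ tn n := fun n => (le_div_iff₀ (h2n n)).2 (Nat.le_ceil _)
      have htub : ∀ n, tn n ≤ s + (1 / 2) ^ n := by
        intro n
        simp only [htndef]
        rw [div_le_iff₀ (h2n n)]
        have h1 : (⌈s * 2 ^ n⌉₊ : ℝ) < s * 2 ^ n + 1 := Nat.ceil_lt_add_one (by positivity)
        have h2 : (s + (1 / 2) ^ n) * 2 ^ n = s * 2 ^ n + 1 := by
          rw [add_mul, ← mul_pow]; norm_num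
        linarith
      have htn : Tendsto tn atTop (𝓝 s) := by
        apply tendsto_of_tendsto_of_tendsto_of_le_of_le (g := fun _ => s)
          (h := fun n => s + (1 / 2) ^ n) tendsto_const_nhds _ htlb htub
        have : Tendsto (fun n : ℕ => s + (1 / 2 : ℝ) ^ n) atTop (𝓝 (s + 0)) :=
          tendsto_const_nhds.add
            (tendsto_pow_atTop_nhds_zero_of_lt_one (by norm_num) (by norm_num))
        simpa using this
      have htnW : Tendsto tn atTop (nhdsWithin s (Set.Ici s)) :=
        tendsto_nhdsWithin_of_tendsto_nhds_of_eventually_within tn htn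
          (Eventually.of_forall fun n => htlb n)
      have hXt : Tendsto (fun n => X (tn n) ω) atTop (𝓝 (X s ω)) :=
        Filter.Tendsto.comp (hRC ω s hs0) htnW
      have h1 : Tendsto (fun n => Real.exp (-(r * tn n))) atTop (𝓝 (Real.exp (-(r * s)))) :=
        (Real.continuous_exp.tendsto _).comp ((htn.const_mul r).neg)
      have h2 : Tendsto (fun n => V (x + X (tn n) ω)) atTop (𝓝 (V (x + X s ω))) :=
        (hVcont.tendsto _).comp (tendsto_const_nhds.add hXt)
      have hmain : Tendsto (fun n => f (tn n) ω) atTop (𝓝 (Λ ω)) := by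
        have hΛω : Λ ω = f s ω := by
          simp only [hΛdef]
          rw [if_pos hτω]
        rw [hΛω]
        simp only [hfdef]
        exact h1.mul h2
      apply hmain.congr'
      rw [Filter.eventuallyEq_iff_exists_mem]
      refine ⟨{n | ⌈s⌉₊ ≤ n}, Filter.mem_atTop _, fun n hn => ?_⟩
      have hd : discT τ n ω = ⌈s * 2 ^ n⌉₊ := by
        rw [discT, if_neg hτω, min_eq_right]
        rw [Nat.ceil_le]
        calc s * 2 ^ n ≤ (n : ℝ) * 2 ^ n := by
              have hsn : s ≤ (n : ℝ) := le_trans (Nat.le_ceil s) (by exact_mod_cast hn)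
              exact mul_le_mul_of_nonneg_right hsn (h2n n).le
          _ = ((n * 2 ^ n : ℕ) : ℝ) := by push_cast; ring
      simp only [hgdef, MeasureTheory.stoppedValue, hd, htndef, WithTop.untopA, WithTop.untopD_coe]
  -- dominated convergence
  have hΛm : AEStronglyMeasurable Λ P :=
    aestronglyMeasurable_of_tendsto_ae atTop (fun n => (hgint n).1) (ae_of_all _ hlim)
  have hΛb : ∀ ω, ‖Λ ω‖ ≤ C := by
    intro ω
    simp only [hΛdef]
    by_cases hτω : τ ω = ∞
    · simp [hτω, hC0]
    · rw [if_pos hτω, Real.norm_eq_abs]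
      exact hfb _ _ ENNReal.toReal_nonneg
  have hΛint : Integrable Λ P :=
    Integrable.mono' (integrable_const C) hΛm (ae_of_all _ hΛb)
  have hΛle : ∫ ω, Λ ω ∂P ≤ V x := by
    have ht := tendsto_integral_of_dominated_convergence (fun _ => C) (fun n => (hgint n).1)
      (integrable_const C) (fun n => ae_of_all _ (hgb n)) (ae_of_all _ hlim)
    exact le_of_tendsto ht (Eventually.of_forall hOS)
  have hpayle : ∀ ω, stopPayoff X r x (fun z => max (K - Real.exp z) 0) τ ω ≤ Λ ω := by
    intro ω
    simp only [stopPayoff, hΛdef, hfdef]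
    by_cases hτω : τ ω ≠ ∞
    · rw [if_pos hτω, if_pos hτω]
      exact mul_le_mul_of_nonneg_left (hdom _) (Real.exp_pos _).le
    · rw [if_neg hτω, if_neg hτω]
  have hΛ0 : ∀ ω, 0 ≤ Λ ω := by
    intro ω
    simp only [hΛdef, hfdef]
    split_ifs with h
    · exact mul_nonneg (Real.exp_pos _).le (le_trans (le_max_right _ 0) (hdom _))
    · exact le_rfl
  by_cases hint : Integrable (stopPayoff X r x (fun z => max (K - Real.exp z) 0) τ) P
  · exact le_trans (integral_mono hint hΛint hpayle) hΛle
  · rw [integral_undef hint]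
    exact le_trans (integral_nonneg hΛ0) hΛle

/-- The first passage time below `y` attains the value `V x`. -/
theorem integral_payoff_sigma (P : Measure Ω) [IsProbabilityMeasure P]
    (ℱ : Filtration ℝ m0) (X : ℝ → Ω → ℝ)
    (hRC : ∀ ω, ∀ t : ℝ, 0 ≤ t → ContinuousWithinAt (fun s => X s ω) (Set.Ici t) t)
    (h0 : ∀ᵐ ω ∂P, X 0 ω = 0)
    (r K y x : ℝ) (hr : 0 < r) (V : ℝ → ℝ) (C : ℝ) (hVb : ∀ z, |V z| ≤ C)
    (hmart : MartOn P ℱ (fun t ω =>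
      Real.exp (-(r * stoppedClock X y x t ω)) * V (x + X (stoppedClock X y x t ω) ω)))
    (hpaste : ∀ z : ℝ, z ≤ y → V z = max (K - Real.exp z) 0) :
    ∫ ω, stopPayoff X r x (fun z => max (K - Real.exp z) 0) (hitBelowE X y x) ω ∂P = V x := by
  obtain ⟨hFm, hFi, hFc⟩ := hmart
  set F : ℝ → Ω → ℝ := fun t ω =>
    Real.exp (-(r * stoppedClock X y x t ω)) * V (x + X (stoppedClock X y x t ω) ω) with hFdef
  have hsc0 : ∀ (t : ℝ) (ω : Ω), 0 ≤ stoppedClock X y x t ω := fun t ω => ENNReal.toReal_nonneg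
  have hC0 : (0 : ℝ) ≤ C := le_trans (abs_nonneg _) (hVb 0)
  have hbF : ∀ (t : ℝ) (ω : Ω), ‖F t ω‖ ≤ C := by
    intro t ω
    rw [Real.norm_eq_abs]
    simp only [hFdef]
    rw [abs_mul, abs_of_pos (Real.exp_pos _)]
    calc Real.exp (-(r * stoppedClock X y x t ω)) * |V (x + X (stoppedClock X y x t ω) ω)|
        ≤ 1 * C := by
          apply mul_le_mul _ (hVb _) (abs_nonneg _) zero_le_one
          rw [Real.exp_le_one_iff]
          have := hsc0 t ω
          nlinarith
      _ = C := one_mul C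
  have hsc00 : ∀ ω, stoppedClock X y x 0 ω = 0 := by
    intro ω
    rw [stoppedClock, ENNReal.ofReal_zero]
    simp
  have hF0 : ∫ ω, F 0 ω ∂P = V x := by
    have heq : F 0 =ᵐ[P] fun _ => V x := by
      filter_upwards [h0] with ω hω
      simp only [hFdef]
      rw [hsc00 ω, hω]
      simp
    rw [integral_congr_ae heq, integral_const]
    simp
  have hintn : ∀ n : ℕ, ∫ ω, F n ω ∂P = V x := by
    intro n
    have hcond := hFc 0 n le_rfl n.cast_nonneg
    calc ∫ ω, F n ω ∂P = ∫ ω, (P[F n | ℱ 0]) ω ∂P := (integral_condExp (ℱ.le 0)).symm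
      _ = ∫ ω, F 0 ω ∂P := integral_congr_ae hcond
      _ = V x := hF0
  have hlim : ∀ ω, Tendsto (fun n : ℕ => F n ω) atTop
      (𝓝 (stopPayoff X r x (fun z => max (K - Real.exp z) 0) (hitBelowE X y x) ω)) := by
    intro ω
    by_cases hne : ∃ t, 0 ≤ t ∧ x + X t ω < y
    · set s := sInf {t : ℝ | 0 ≤ t ∧ x + X t ω < y} with hs
      have hσ : hitBelowE X y x ω = ENNReal.ofReal s := by rw [hitBelowE, if_pos hne]
      have hs0 : 0 ≤ s := Real.sInf_nonneg fun _ ht => ht.1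
      have hsc : ∀ n : ℕ, s ≤ (n : ℝ) → stoppedClock X y x n ω = s := by
        intro n hn
        rw [stoppedClock, hσ, min_eq_right (ENNReal.ofReal_le_ofReal hn),
          ENNReal.toReal_ofReal hs0]
      have hpay : stopPayoff X r x (fun z => max (K - Real.exp z) 0) (hitBelowE X y x) ω =
          Real.exp (-(r * s)) * max (K - Real.exp (x + X s ω)) 0 := by
        rw [stopPayoff, if_pos (by rw [hσ]; exact ENNReal.ofReal_ne_top), hσ,
          ENNReal.toReal_ofReal hs0]
      have hVeq : V (x + X s ω) = max (K - Real.exp (x + X s ω)) 0 :=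
        hpaste _ (sInf_hit_le X hRC y x ω hne)
      rw [hpay]
      apply tendsto_atTop_of_eventually_const (i₀ := ⌈s⌉₊)
      intro n hn
      simp only [hFdef]
      rw [hsc n (le_trans (Nat.le_ceil s) (by exact_mod_cast hn)), hVeq]
    · have hσ : hitBelowE X y x ω = ∞ := by rw [hitBelowE, if_neg hne]
      have hsc : ∀ n : ℕ, stoppedClock X y x n ω = (n : ℝ) := by
        intro n
        rw [stoppedClock, hσ, min_eq_left le_top, ENNReal.toReal_ofReal n.cast_nonneg]
      have hpay : stopPayoff X r x (fun z => max (K - Real.exp z) 0) (hitBelowE X y x) ω = 0 := by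
        rw [stopPayoff, if_neg]
        simp [hσ]
      rw [hpay]
      apply squeeze_zero_norm (a := fun n : ℕ => Real.exp (-r) ^ n * C)
      · intro n
        rw [Real.norm_eq_abs]
        simp only [hFdef]
        rw [hsc n, abs_mul, abs_of_pos (Real.exp_pos _)]
        have h1 : Real.exp (-(r * n)) = Real.exp (-r) ^ n := by
          rw [← Real.exp_nat_mul]
          ring_nf
        rw [h1]
        exact mul_le_mul_of_nonneg_left (hVb _) (pow_nonneg (Real.exp_pos _).le _)
      · have := (tendsto_pow_atTop_nhds_zero_of_lt_one (Real.exp_pos (-r)).le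
          (Real.exp_lt_one_iff.mpr (by linarith))).mul_const C
        simpa using this
  have hFmeas : ∀ n : ℕ, AEStronglyMeasurable (F n) P := fun n =>
    ((hFm n n.cast_nonneg).mono (ℱ.le n)).aestronglyMeasurable
  have hT := tendsto_integral_of_dominated_convergence (fun _ => C) hFmeas
    (integrable_const C) (fun n => ae_of_all _ fun ω => hbF n ω) (ae_of_all _ hlim)
  have hconst : (fun n : ℕ => ∫ ω, F n ω ∂P) = fun _ => V x := funext fun n => hintn n
  rw [hconst] at hT
  exact tendsto_nhds_unique hT tendsto_const_nhds

end Stmt15Aux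

theorem stmt15 [m0 : MeasurableSpace Ω] (P : Measure Ω) [IsProbabilityMeasure P]
    (ℱ : Filtration ℝ m0)
    (hfiltRC : ∀ t : ℝ, (ℱ t : MeasurableSpace Ω) = ⨅ s ∈ Set.Ioi t, (ℱ s : MeasurableSpace Ω))
    (hcomplete : ∀ N : Set Ω, MeasurableSet N → P N = 0 → MeasurableSet[ℱ 0] N)
    (X : ℝ → Ω → ℝ)
    (hAdapted : ∀ t : ℝ, 0 ≤ t → StronglyMeasurable[ℱ t] (X t))
    (hRC : ∀ ω, ∀ t : ℝ, 0 ≤ t → ContinuousWithinAt (fun s => X s ω) (Set.Ici t) t)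
    (h0 : ∀ᵐ ω ∂P, X 0 ω = 0)
    (r K y : ℝ) (hr : 0 < r) (hK : 0 < K)
    (V : ℝ → ℝ) (hVbdd : ∃ C, ∀ z, |V z| ≤ C) (hVcont : Continuous V)
    (hmart : ∀ x : ℝ, MartOn P ℱ (fun t ω =>
      Real.exp (-(r * stoppedClock X y x t ω)) * V (x + X (stoppedClock X y x t ω) ω)))
    (hsuper : ∀ x : ℝ, SupermartOn P ℱ (fun t ω => Real.exp (-(r * t)) * V (x + X t ω)))
    (hpaste : ∀ z : ℝ, z ≤ y → V z = max (K - Real.exp z) 0)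
    (hdom : ∀ z : ℝ, max (K - Real.exp z) 0 ≤ V z) :
    ∀ x : ℝ,
      V x = (⨆ τ : {τ : Ω → ℝ≥0∞ // IsStopTime ℱ τ},
          ∫ ω, stopPayoff X r x (fun z => max (K - Real.exp z) 0) τ.1 ω ∂P) ∧
      (∫ ω, stopPayoff X r x (fun z => max (K - Real.exp z) 0) (hitBelowE X y x) ω ∂P) =
        V x := by
  obtain ⟨C, hVb⟩ := hVbdd
  intro x
  have hσst : IsStopTime ℱ (hitBelowE X y x) :=
    isStopTime_hitBelowE ℱ hfiltRC X hAdapted hRC y x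
  have hup : ∀ τ : {τ : Ω → ℝ≥0∞ // IsStopTime ℱ τ},
      ∫ ω, stopPayoff X r x (fun z => max (K - Real.exp z) 0) τ.1 ω ∂P ≤ V x := fun τ =>
    integral_payoff_le P ℱ X hRC h0 r K x hr V C hVb hVcont (hsuper x) hdom τ.1 τ.2
  have hatt : ∫ ω, stopPayoff X r x (fun z => max (K - Real.exp z) 0)
      (hitBelowE X y x) ω ∂P = V x :=
    integral_payoff_sigma P ℱ X hRC h0 r K y x hr V C hVb (hmart x) hpaste
  refine ⟨le_antisymm ?_ ?_, hatt⟩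
  · have hbdd : BddAbove (Set.range fun τ : {τ : Ω → ℝ≥0∞ // IsStopTime ℱ τ} =>
        ∫ ω, stopPayoff X r x (fun z => max (K - Real.exp z) 0) τ.1 ω ∂P) := by
      refine ⟨V x, ?_⟩
      rintro v ⟨τ, rfl⟩
      exact hup τ
    exact le_ciSup_of_le hbdd ⟨hitBelowE X y x, hσst⟩ hatt.ge
  · haveI hne : Nonempty {τ : Ω → ℝ≥0∞ // IsStopTime ℱ τ} :=
      ⟨⟨fun _ => 0, fun t ht => by simp⟩⟩
    exact ciSup_le hup

end AKLevy
end
end
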